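/- arXiv:1901.01137 — 10 statements merged into one kernel-verified Lean document; each statement's English description precedes it below -/
import Mathlib

section
/- Let X and Y be jointly distributed random variables each taking finitely many values, with joint probabilities p(xᵢ,yⱼ), marginals p(xᵢ) = Σⱼ p(xᵢ,yⱼ) and p(yⱼ) = Σᵢ p(xᵢ,yⱼ), and conditional probabilities p(xᵢ|yⱼ) = p(xᵢ,yⱼ)/p(yⱼ) whenever p(yⱼ) > 0. If 0 < ϖ ≤ 2, then the message importance loss is nonnegative: Φ_ϖ(X||Y) = L(ϖ,X) − L(ϖ,X|Y) ≥ 0. -/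
open Finset

lemma mim_concave {ϖ : ℝ} (hϖ : 0 < ϖ) (hϖ2 : ϖ ≤ 2) :
    ConcaveOn ℝ (Set.Icc (0:ℝ) 1) (fun p => p * Real.exp (ϖ * (1 - p))) := by
  have hD : Convex ℝ (Set.Icc (0:ℝ) 1) := convex_Icc 0 1
  have hder : ∀ x : ℝ, HasDerivAt (fun p => p * Real.exp (ϖ * (1 - p)))
      (Real.exp (ϖ * (1 - x)) * (1 - ϖ * x)) x := by
    intro x
    have hg : HasDerivAt (fun p : ℝ => Real.exp (ϖ * (1 - p))) (-ϖ * Real.exp (ϖ * (1 - x))) x := by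
      have h1 : HasDerivAt (fun p : ℝ => ϖ * (1 - p)) (-ϖ) x := by
        simpa using ((hasDerivAt_id x).const_sub 1).const_mul ϖ
      simpa [mul_comm, Function.comp_def] using (Real.hasDerivAt_exp (ϖ * (1 - x))).comp x h1
    have := (hasDerivAt_id x).mul hg
    refine this.congr_deriv ?_
    simp only [id_eq]
    ring
  have hder2 : ∀ x : ℝ, HasDerivAt (fun p => Real.exp (ϖ * (1 - p)) * (1 - ϖ * p))
      (-ϖ * Real.exp (ϖ * (1 - x)) * (2 - ϖ * x)) x := by
    intro x
    have hg : HasDerivAt (fun p : ℝ => Real.exp (ϖ * (1 - p))) (-ϖ * Real.exp (ϖ * (1 - x))) x := by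
      have h1 : HasDerivAt (fun p : ℝ => ϖ * (1 - p)) (-ϖ) x := by
        simpa using ((hasDerivAt_id x).const_sub 1).const_mul ϖ
      simpa [mul_comm, Function.comp_def] using (Real.hasDerivAt_exp (ϖ * (1 - x))).comp x h1
    have h2 : HasDerivAt (fun p : ℝ => 1 - ϖ * p) (-ϖ) x := by
      simpa using ((hasDerivAt_id x).const_mul ϖ).const_sub 1
    have := hg.mul h2
    refine this.congr_deriv ?_
    ring
  refine concaveOn_of_hasDerivWithinAt2_nonpos hD ?_
    (f' := fun x => Real.exp (ϖ * (1 - x)) * (1 - ϖ * x))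
    (f'' := fun x => -ϖ * Real.exp (ϖ * (1 - x)) * (2 - ϖ * x))
    (fun x _ => (hder x).hasDerivWithinAt) (fun x _ => (hder2 x).hasDerivWithinAt) ?_
  · exact (continuous_id.mul (Real.continuous_exp.comp (by continuity))).continuousOn
  · intro x hx
    rw [interior_Icc] at hx
    have h1 : 0 < Real.exp (ϖ * (1 - x)) := Real.exp_pos _
    have h2 : 0 ≤ 2 - ϖ * x := by nlinarith [hx.1, hx.2]
    show -ϖ * Real.exp (ϖ * (1 - x)) * (2 - ϖ * x) ≤ 0
    nlinarith [mul_nonneg (mul_nonneg hϖ.le h1.le) h2]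

/-- For jointly distributed finite random variables `X, Y` with joint
probabilities `q i j`, marginals `p(xᵢ) = ∑ⱼ q i j` and `p(yⱼ) = ∑ᵢ q i j`, and conditional
probabilities `p(xᵢ|yⱼ) = q i j / p(yⱼ)`, if `0 < ϖ ≤ 2` then the message importance loss
`Φ_ϖ(X‖Y) = L(ϖ,X) − L(ϖ,X|Y)` is nonnegative. -/
theorem message_importance_loss_nonneg {m n : ℕ} (ϖ : ℝ) (hϖ : 0 < ϖ) (hϖ2 : ϖ ≤ 2)
    (q : Fin m → Fin n → ℝ) (hq : ∀ i j, 0 ≤ q i j)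
    (hsum : ∑ i, ∑ j, q i j = 1) :
    (∑ i, (∑ j, q i j) * Real.exp (ϖ * (1 - ∑ j, q i j)))
      - (∑ j, (∑ i, q i j) *
          ∑ i, (q i j / ∑ k, q k j) * Real.exp (ϖ * (1 - q i j / ∑ k, q k j))) ≥ 0 := by
  set f : ℝ → ℝ := fun p => p * Real.exp (ϖ * (1 - p)) with hf
  have hconc := mim_concave hϖ hϖ2
  set py : Fin n → ℝ := fun j => ∑ i, q i j with hpy
  set c : Fin m → Fin n → ℝ := fun i j => q i j / py j with hc
  have hpy0 : ∀ j, 0 ≤ py j := fun j => Finset.sum_nonneg fun i _ => hq i j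
  have hqle : ∀ i j, q i j ≤ py j := fun i j =>
    Finset.single_le_sum (fun k _ => hq k j) (Finset.mem_univ i)
  have hcmem : ∀ i j, c i j ∈ Set.Icc (0:ℝ) 1 := by
    intro i j
    rcases eq_or_lt_of_le (hpy0 j) with h | h
    · simp [hc, ← h]
    · exact ⟨div_nonneg (hq i j) (hpy0 j), div_le_one_of_le₀ (hqle i j) (hpy0 j)⟩
  have hpysum : ∑ j, py j = 1 := by
    rw [hpy, Finset.sum_comm]; exact hsum
  have hrec : ∀ i j, py j * c i j = q i j := by
    intro i j
    rcases eq_or_lt_of_le (hpy0 j) with h | h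
    · have : q i j = 0 := le_antisymm (h ▸ hqle i j) (hq i j)
      simp [hc, ← h, this]
    · simp only [hc]; field_simp [ne_of_gt h]
  rw [ge_iff_le, sub_nonneg]
  calc ∑ j, py j * ∑ i, c i j * Real.exp (ϖ * (1 - c i j))
      = ∑ i, ∑ j, py j • f (c i j) := by
        rw [Finset.sum_comm]
        refine Finset.sum_congr rfl fun j _ => ?_
        rw [Finset.mul_sum]
        exact Finset.sum_congr rfl fun i _ => by simp only [hf, smul_eq_mul]
    _ ≤ ∑ i, f (∑ j, py j • c i j) := by
        refine Finset.sum_le_sum fun i _ => ?_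
        exact hconc.le_map_sum (fun j _ => hpy0 j) hpysum (fun j _ => hcmem i j)
    _ = ∑ i, f (∑ j, q i j) := by
        refine Finset.sum_congr rfl fun i _ => ?_
        congr 1
        exact Finset.sum_congr rfl fun j _ => by rw [smul_eq_mul, hrec]
end

section
/- Let 0 < ϖ < 2 and 0 ≤ β ≤ 1. For a binary input X with distribution (p, 1−p), p ∈ (0,1), passed through the binary symmetric transfer matrix p(y|x) with entries p(y=x̄|x) = β and p(y=x|x) = 1−β, let Φ_ϖ(p) = L(ϖ,X) − L(ϖ,X|Y) denote the message importance loss, where the conditional probabilities p(x|y) are computed by Bayes' rule. Then the maximum of Φ_ϖ(p) over p ∈ (0,1) is attained at p = 1/2, and the maximal value (the message importance loss capacity) equals C(ϖ,β) = exp(ϖ/2) − [β·exp(ϖ(1−β)) + (1−β)·exp(ϖβ)]. -/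
open Real

private lemma hasD_aux (x : ℝ) : HasDerivAt (fun u : ℝ => 1 + u - (1-u) * Real.exp (2*u))
    (1 - ((-1) * Real.exp (2*x) + (1-x) * (Real.exp (2*x) * 2))) x := by
  have h2x : HasDerivAt (fun u : ℝ => 2*u) 2 x := by
    simpa using (hasDerivAt_id x).const_mul 2
  have hexp : HasDerivAt (fun u : ℝ => Real.exp (2*u)) (Real.exp (2*x) * 2) x := h2x.exp
  have hlin : HasDerivAt (fun u : ℝ => 1 - u) (-1) x := by
    simpa using (hasDerivAt_id x).const_sub 1
  have hid : HasDerivAt (fun u : ℝ => 1 + u) 1 x := by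
    simpa using (hasDerivAt_id x).const_add 1
  exact hid.sub (hlin.mul hexp)

/-- Key exponential inequality: `(1-u) e^{2u} ≤ 1+u` for `u ≥ 0`. -/
private lemma exp_key (u : ℝ) (hu : 0 ≤ u) : (1 - u) * Real.exp (2*u) ≤ 1 + u := by
  have hmono : MonotoneOn (fun u : ℝ => 1 + u - (1-u) * Real.exp (2*u)) (Set.Ici 0) := by
    apply monotoneOn_of_deriv_nonneg (convex_Ici 0)
    · fun_prop
    · intro x _
      exact (hasD_aux x).differentiableAt.differentiableWithinAt
    · intro x _
      rw [(hasD_aux x).deriv]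
      rcases le_or_gt (1 - 2*x) 0 with h | h
      · nlinarith [Real.exp_pos (2*x)]
      · have h1 : -(2*x) + 1 ≤ Real.exp (-(2*x)) := Real.add_one_le_exp _
        have h2 : Real.exp (-(2*x)) * Real.exp (2*x) = 1 := by
          rw [← Real.exp_add]; norm_num
        nlinarith [Real.exp_pos (2*x)]
  have := hmono (by simp : (0:ℝ) ∈ Set.Ici (0:ℝ)) (hu : u ∈ Set.Ici (0:ℝ)) hu
  norm_num at this
  nlinarith

/-- Monotonicity of `R_q(c) = q e^c + (1-q) e^{-c}`. -/
private lemma R_mono (q c c' : ℝ) (hq : 0 ≤ q) (hcc : c' ≤ c)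
    (hbud : q * Real.exp (c + c') ≤ 1 - q) :
    q * Real.exp c + (1-q) * Real.exp (-c) ≤ q * Real.exp c' + (1-q) * Real.exp (-c') := by
  have hE : Real.exp c' ≤ Real.exp c := Real.exp_le_exp.2 hcc
  have m1 : Real.exp (-c) = Real.exp (-(c+c')) * Real.exp c' := by
    rw [← Real.exp_add, show -(c+c') + c' = -c by ring]
  have m2 : Real.exp (-c') = Real.exp (-(c+c')) * Real.exp c := by
    rw [← Real.exp_add, show -(c+c') + c = -c' by ring]
  have hfac : 0 ≤ (1-q) * Real.exp (-(c+c')) - q := by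
    have h2 : Real.exp (c+c') * Real.exp (-(c+c')) = 1 := by
      rw [← Real.exp_add, show c+c' + -(c+c') = 0 by ring, Real.exp_zero]
    nlinarith [Real.exp_pos (-(c+c')), Real.exp_pos (c+c'),
      mul_le_mul_of_nonneg_right hbud (Real.exp_pos (-(c+c'))).le]
  rw [m1, m2]
  nlinarith [mul_nonneg hfac (sub_nonneg.2 hE)]

private lemma budget (q s : ℝ) (hq0 : 0 ≤ q) (hq2 : q ≤ 1/2) (hs : s ≤ 2*(1-2*q)) :
    q * Real.exp s ≤ 1 - q := by
  have h1 : q * Real.exp s ≤ q * Real.exp (2*(1-2*q)) :=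
    mul_le_mul_of_nonneg_left (Real.exp_le_exp.2 hs) hq0
  have h2 := exp_key (1-2*q) (by linarith)
  nlinarith [Real.exp_pos (2*(1-2*q))]

/-- The explicit formula for the message importance loss. -/
noncomputable def phiF (ϖ β p : ℝ) : ℝ :=
  (p * Real.exp (ϖ * (1 - p)) + (1 - p) * Real.exp (ϖ * p))
    - (p * (1 - β) *
        Real.exp (ϖ * (1 - p * (1 - β) / (p * (1 - β) + (1 - p) * β)))
      + (1 - p) * β *
        Real.exp (ϖ * (1 - (1 - p) * β / (p * (1 - β) + (1 - p) * β)))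
      + p * β *
        Real.exp (ϖ * (1 - p * β / (p * β + (1 - p) * (1 - β))))
      + (1 - p) * (1 - β) *
        Real.exp (ϖ * (1 - (1 - p) * (1 - β) / (p * β + (1 - p) * (1 - β)))))

private lemma phi_symm_p (ϖ β p : ℝ) : phiF ϖ β (1-p) = phiF ϖ β p := by
  unfold phiF; ring_nf

private lemma phi_symm_b (ϖ β p : ℝ) : phiF ϖ (1-β) p = phiF ϖ β p := by
  unfold phiF; ring_nf

private lemma phi_half (ϖ β : ℝ) :
    phiF ϖ β (1/2) = Real.exp (ϖ/2)
      - (β * Real.exp (ϖ * (1 - β)) + (1 - β) * Real.exp (ϖ * β)) := by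
  unfold phiF
  rw [show (1:ℝ) / 2 * (1 - β) + (1 - 1 / 2) * β = 1/2 by ring]
  rw [show (1:ℝ) / 2 * β + (1 - 1 / 2) * (1 - β) = 1/2 by ring]
  rw [show ϖ * (1 - 1 / 2 * (1 - β) / (1/2)) = ϖ * β by ring]
  rw [show ϖ * (1 - (1 - 1 / 2) * β / (1/2)) = ϖ * (1 - β) by ring]
  rw [show ϖ * (1 - 1 / 2 * β / (1/2)) = ϖ * (1 - β) by ring]
  rw [show ϖ * (1 - (1 - 1 / 2) * (1 - β) / (1/2)) = ϖ * β by ring]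
  rw [show ϖ * (1 - 1/(2:ℝ)) = ϖ/2 by ring]
  rw [show ϖ * (1/(2:ℝ)) = ϖ/2 by ring]
  ring

private lemma assemble (l p β PP MM A1 A2 A3 A4 A5 A6 : ℝ)
    (h1 : A1 = l + l*(1-2*p)) (h2 : A2 = l + -(l*(1-2*p)))
    (h3 : A3 = l + (PP + -MM)) (h4 : A4 = l + (-PP + MM))
    (h5 : A5 = l + (PP + MM)) (h6 : A6 = l + (-PP + -MM)) :
    (p * Real.exp A1 + (1 - p) * Real.exp A2)
      - (p * (1 - β) * Real.exp A3 + (1 - p) * β * Real.exp A4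
        + p * β * Real.exp A5 + (1 - p) * (1 - β) * Real.exp A6)
    = Real.exp l *
        ((p * Real.exp (l*(1-2*p)) + (1-p) * Real.exp (-(l*(1-2*p))))
          - (p * Real.exp PP + (1-p) * Real.exp (-PP))
            * (β * Real.exp MM + (1-β) * Real.exp (-MM))) := by
  subst h1 h2 h3 h4 h5 h6
  simp only [Real.exp_add]
  ring

private lemma main_chain (l p β PP MM : ℝ) (hl0 : 0 < l) (hl1 : l ≤ 1)
    (hp0 : 0 < p) (hp : p ≤ 1/2) (hb0 : 0 ≤ β) (hb : β ≤ 1/2)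
    (hPP0 : 0 ≤ PP) (hPPt : PP ≤ l*(1-2*p)) (hMM0 : 0 ≤ MM) (hMMt : MM ≤ l*(1-2*β)) :
    (p * Real.exp (l*(1-2*p)) + (1-p) * Real.exp (-(l*(1-2*p))))
      - (p * Real.exp PP + (1-p) * Real.exp (-PP))
        * (β * Real.exp MM + (1-β) * Real.exp (-MM))
    ≤ 1 - (β * Real.exp (l*(1-2*β)) + (1-β) * Real.exp (-(l*(1-2*β)))) := by
  have hp2 : (0:ℝ) ≤ 1 - 2*p := by linarith
  have hb2 : (0:ℝ) ≤ 1 - 2*β := by linarith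
  have hA1 : p * Real.exp (l*(1-2*p)) + (1-p) * Real.exp (-(l*(1-2*p)))
      ≤ p * Real.exp PP + (1-p) * Real.exp (-PP) := by
    apply R_mono p _ _ hp0.le hPPt
    apply budget p _ hp0.le hp
    nlinarith
  have hB1 : β * Real.exp (l*(1-2*β)) + (1-β) * Real.exp (-(l*(1-2*β)))
      ≤ β * Real.exp MM + (1-β) * Real.exp (-MM) := by
    apply R_mono β _ _ hb0 hMMt
    apply budget β _ hb0 hb
    nlinarith
  have hX1 : p * Real.exp (l*(1-2*p)) + (1-p) * Real.exp (-(l*(1-2*p))) ≤ 1 := by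
    have := R_mono p (l*(1-2*p)) 0 hp0.le (by nlinarith)
      (by apply budget p _ hp0.le hp; nlinarith)
    simpa using this
  have hY1 : β * Real.exp (l*(1-2*β)) + (1-β) * Real.exp (-(l*(1-2*β))) ≤ 1 := by
    have := R_mono β (l*(1-2*β)) 0 hb0 (by nlinarith)
      (by apply budget β _ hb0 hb; nlinarith)
    simpa using this
  have hY0 : 0 ≤ β * Real.exp (l*(1-2*β)) + (1-β) * Real.exp (-(l*(1-2*β))) := by
    have := Real.exp_pos (l*(1-2*β)); have := Real.exp_pos (-(l*(1-2*β))); nlinarith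
  have hA0 : 0 ≤ p * Real.exp PP + (1-p) * Real.exp (-PP) := by
    have := Real.exp_pos PP; have := Real.exp_pos (-PP); nlinarith
  have hXY : (p * Real.exp (l*(1-2*p)) + (1-p) * Real.exp (-(l*(1-2*p))))
      * (β * Real.exp (l*(1-2*β)) + (1-β) * Real.exp (-(l*(1-2*β))))
      ≤ (p * Real.exp PP + (1-p) * Real.exp (-PP))
        * (β * Real.exp MM + (1-β) * Real.exp (-MM)) :=
    mul_le_mul hA1 hB1 hY0 hA0
  nlinarith [mul_nonneg (sub_nonneg.2 hX1) (sub_nonneg.2 hY1)]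

private lemma core (ϖ β p : ℝ) (hϖ0 : 0 < ϖ) (hϖ2 : ϖ ≤ 2) (hb0 : 0 ≤ β) (hb : β ≤ 1/2)
    (hp0 : 0 < p) (hp : p ≤ 1/2) : phiF ϖ β p ≤ phiF ϖ β (1/2) := by
  rw [phi_half]
  have hp1 : p < 1 := by linarith
  have hb1 : β < 1 := by linarith
  have hp2 : (0:ℝ) ≤ 1 - 2*p := by linarith
  have hb2 : (0:ℝ) ≤ 1 - 2*β := by linarith
  have hq0 : 0 < p*(1-β)+(1-p)*β := by nlinarith
  have hq1 : 0 < p*β+(1-p)*(1-β) := by nlinarith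
  set l := ϖ/2 with hldef
  have hl0 : 0 < l := by rw [hldef]; linarith
  have hl1 : l ≤ 1 := by rw [hldef]; linarith
  set D := (p*(1-β)+(1-p)*β)*(p*β+(1-p)*(1-β)) with hDdef
  have hD : 0 < D := mul_pos hq0 hq1
  have hD_id : D = β*(1-β) + p*(1-p)*(1-2*β)^2 := by rw [hDdef]; ring
  set PP := l*(1-2*p)*(β*(1-β))/D with hPPdef
  set MM := l*(p*(1-p)*(1-2*β))/D with hMMdef
  have hPP0 : 0 ≤ PP := by
    rw [hPPdef]
    apply div_nonneg _ hD.le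
    exact mul_nonneg (mul_nonneg hl0.le hp2) (mul_nonneg hb0 (by linarith))
  have hMM0 : 0 ≤ MM := by
    rw [hMMdef]
    apply div_nonneg _ hD.le
    apply mul_nonneg hl0.le
    exact mul_nonneg (mul_nonneg hp0.le (by linarith)) hb2
  have hPPt : PP ≤ l*(1-2*p) := by
    rw [hPPdef, div_le_iff₀ hD, hD_id]
    nlinarith [mul_nonneg (mul_nonneg hl0.le hp2)
      (mul_nonneg (mul_nonneg hp0.le (by linarith : (0:ℝ) ≤ 1-p)) (sq_nonneg (1-2*β)))]
  have hMMt : MM ≤ l*(1-2*β) := by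
    rw [hMMdef, div_le_iff₀ hD, hD_id]
    nlinarith [mul_nonneg (mul_nonneg hl0.le hb2)
      (mul_nonneg (mul_nonneg hb0 (by linarith : (0:ℝ) ≤ 1-β)) (sq_nonneg (1-2*p)))]
  have h1 : ϖ * (1 - p) = l + l*(1-2*p) := by rw [hldef]; ring
  have h2 : ϖ * p = l + -(l*(1-2*p)) := by rw [hldef]; ring
  have h3 : ϖ * (1 - p * (1 - β) / (p * (1 - β) + (1 - p) * β)) = l + (PP + -MM) := by
    rw [hPPdef, hMMdef, hDdef, hldef]
    generalize hq : p * (1 - β) + (1 - p) * β = q at hq0 ⊢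
    generalize hr : p * β + (1 - p) * (1 - β) = r at hq1 ⊢
    field_simp
    subst hq hr
    ring
  have h4 : ϖ * (1 - (1 - p) * β / (p * (1 - β) + (1 - p) * β)) = l + (-PP + MM) := by
    rw [hPPdef, hMMdef, hDdef, hldef]
    field_simp
    ring
  have h5 : ϖ * (1 - p * β / (p * β + (1 - p) * (1 - β))) = l + (PP + MM) := by
    rw [hPPdef, hMMdef, hDdef, hldef]
    generalize hq : p * (1 - β) + (1 - p) * β = q at hq0 ⊢
    generalize hr : p * β + (1 - p) * (1 - β) = r at hq1 ⊢
    field_simp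
    subst hq hr
    ring
  have h6 : ϖ * (1 - (1 - p) * (1 - β) / (p * β + (1 - p) * (1 - β))) = l + (-PP + -MM) := by
    rw [hPPdef, hMMdef, hDdef, hldef]
    field_simp
    ring
  have hmaster := assemble l p β PP MM _ _ _ _ _ _ h1 h2 h3 h4 h5 h6
  have hRHS : Real.exp l - (β * Real.exp (ϖ * (1 - β)) + (1 - β) * Real.exp (ϖ * β))
      = Real.exp l * (1 - (β * Real.exp (l*(1-2*β)) + (1-β) * Real.exp (-(l*(1-2*β))))) := by
    rw [show ϖ * (1 - β) = l + l*(1-2*β) by rw [hldef]; ring,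
        show ϖ * β = l + -(l*(1-2*β)) by rw [hldef]; ring,
        Real.exp_add, Real.exp_add]
    ring
  calc phiF ϖ β p
      = Real.exp l *
        ((p * Real.exp (l*(1-2*p)) + (1-p) * Real.exp (-(l*(1-2*p))))
          - (p * Real.exp PP + (1-p) * Real.exp (-PP))
            * (β * Real.exp MM + (1-β) * Real.exp (-MM))) := hmaster
    _ ≤ Real.exp l * (1 - (β * Real.exp (l*(1-2*β)) + (1-β) * Real.exp (-(l*(1-2*β))))) :=
        mul_le_mul_of_nonneg_left
          (main_chain l p β PP MM hl0 hl1 hp0 hp hb0 hb hPP0 hPPt hMM0 hMMt)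
          (Real.exp_pos l).le
    _ = Real.exp l - (β * Real.exp (ϖ * (1 - β)) + (1 - β) * Real.exp (ϖ * β)) := hRHS.symm

/-- For the binary symmetric transfer matrix with parameter `β` and a
Bernoulli(`p`) input, the message importance loss `Φ_ϖ(p) = L(ϖ,X) − L(ϖ,X|Y)` (with the
conditional probabilities `p(x|y)` computed by Bayes' rule) is maximized over `p ∈ (0,1)`
at `p = 1/2`, and the maximal value (the message importance loss capacity) is
`C(ϖ,β) = exp(ϖ/2) − [β·exp(ϖ(1−β)) + (1−β)·exp(ϖβ)]`. -/
theorem milc_binary_symmetric (ϖ β : ℝ) (hϖ : 0 < ϖ) (hϖ2 : ϖ < 2)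
    (hβ0 : 0 ≤ β) (hβ1 : β ≤ 1) (Φ : ℝ → ℝ)
    (hΦ : ∀ p : ℝ,
      Φ p = (p * Real.exp (ϖ * (1 - p)) + (1 - p) * Real.exp (ϖ * p))
        - (p * (1 - β) *
            Real.exp (ϖ * (1 - p * (1 - β) / (p * (1 - β) + (1 - p) * β)))
          + (1 - p) * β *
            Real.exp (ϖ * (1 - (1 - p) * β / (p * (1 - β) + (1 - p) * β)))
          + p * β *
            Real.exp (ϖ * (1 - p * β / (p * β + (1 - p) * (1 - β))))
          + (1 - p) * (1 - β) *
            Real.exp (ϖ * (1 - (1 - p) * (1 - β) / (p * β + (1 - p) * (1 - β)))))) :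
    IsMaxOn Φ (Set.Ioo (0:ℝ) 1) (1/2) ∧
    Φ (1/2) = Real.exp (ϖ / 2)
        - (β * Real.exp (ϖ * (1 - β)) + (1 - β) * Real.exp (ϖ * β)) := by
  have hphi : ∀ x : ℝ, Φ x = phiF ϖ β x := fun x => by rw [hΦ x]; rfl
  have hϖ2' : ϖ ≤ 2 := hϖ2.le
  constructor
  · rw [isMaxOn_iff]
    intro x hx
    obtain ⟨hx0, hx1⟩ := hx
    rw [hphi x, hphi (1/2)]
    rcases le_or_gt x (1/2) with h | h
    · rcases le_or_gt β (1/2) with hbb | hbb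
      · exact core ϖ β x hϖ hϖ2' hβ0 hbb hx0 h
      · have h1 := core ϖ (1-β) x hϖ hϖ2' (by linarith) (by linarith) hx0 h
        rw [phi_symm_b, phi_symm_b] at h1
        exact h1
    · rcases le_or_gt β (1/2) with hbb | hbb
      · have h1 := core ϖ β (1-x) hϖ hϖ2' hβ0 hbb (by linarith) (by linarith)
        rw [phi_symm_p] at h1
        exact h1
      · have h1 := core ϖ (1-β) (1-x) hϖ hϖ2' (by linarith) (by linarith)
          (by linarith) (by linarith)
        rw [phi_symm_p, phi_symm_b, phi_symm_b] at h1
        exact h1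
  · rw [hphi (1/2), phi_half]
end

section
/- Let 0 < ϖ < 2 and 0 ≤ β ≤ 1. For a binary input X with distribution (p, 1−p), p ∈ (0,1), passed through the binary erasure transfer matrix with p(y=x|x) = 1−β and p(y=e|x) = β (erasure symbol e), let Φ_ϖ(p) = L(ϖ,X) − L(ϖ,X|Y) denote the message importance loss. Then the maximum of Φ_ϖ(p) over p ∈ (0,1) is attained at p = 1/2, and the maximal value (the message importance loss capacity) equals C(ϖ,β) = (1−β)·(exp(ϖ/2) − 1). -/
/-- Key inequality: for `0 < ϖ ≤ 2` and `p ∈ [0,1]`,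
`p·e^{ϖ(1-p)} + (1-p)·e^{ϖp} ≤ e^{ϖ/2}`. -/
lemma milc_key (ϖ p : ℝ) (h0 : 0 < ϖ) (h2 : ϖ ≤ 2) (hp0 : 0 ≤ p) (hp1 : p ≤ 1) :
    p * Real.exp (ϖ * (1 - p)) + (1 - p) * Real.exp (ϖ * p) ≤ Real.exp (ϖ / 2) := by
  set u : ℝ := ϖ * (p - 1/2) with hu
  set a : ℝ := Real.exp u with ha
  have hapos : 0 < a := Real.exp_pos u
  have h1 : Real.exp (ϖ * (1 - p)) = Real.exp (ϖ/2) * a⁻¹ := by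
    rw [ha, ← Real.exp_neg, ← Real.exp_add]
    rw [hu]
    ring_nf
  have h2' : Real.exp (ϖ * p) = Real.exp (ϖ/2) * a := by
    rw [ha, ← Real.exp_add]
    rw [hu]
    ring_nf
  rw [h1, h2']
  have hkey : p + (1 - p) * a ^ 2 ≤ a := by
    rcases le_total p (1/2) with hph | hph
    · -- here u ≤ 0, a ≤ 1, and a ≥ 1 + u ≥ 2p
      have hu0 : u ≤ 0 := by
        rw [hu]; nlinarith
      have ha1 : a ≤ 1 := Real.exp_le_one_iff.mpr hu0
      have hage : 2 * p ≤ a := by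
        have := Real.add_one_le_exp u
        rw [← ha] at this
        nlinarith
      have hfac : 0 ≤ (1 - p) * a - p := by nlinarith
      nlinarith [mul_nonpos_of_nonpos_of_nonneg (by linarith : a - 1 ≤ 0) hfac]
    · -- here u ≥ 0, a ≥ 1, and a ≤ exp(2p-1), with (1-p)·exp(2p-1) ≤ 1/2
      have hu0 : 0 ≤ u := by
        rw [hu]; nlinarith
      have ha1 : 1 ≤ a := Real.one_le_exp hu0
      have hale : a ≤ Real.exp (2*p - 1) := by
        rw [ha]; exact Real.exp_le_exp.mpr (by nlinarith)
      have hb : (2 - 2*p) * Real.exp (2*p - 1) ≤ 1 := by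
        have h3 := Real.add_one_le_exp (-(2*p - 1))
        have h4 : Real.exp (-(2*p-1)) * Real.exp (2*p-1) = 1 := by
          rw [← Real.exp_add]; simp
        nlinarith [Real.exp_pos (2*p - 1)]
      have hfac : (1 - p) * a - p ≤ 0 := by
        nlinarith [Real.exp_pos (2*p - 1)]
      nlinarith [mul_nonpos_of_nonneg_of_nonpos (by linarith : 0 ≤ a - 1) hfac]
  have hsum : p * a⁻¹ + (1 - p) * a ≤ 1 := by
    have heq : p * a⁻¹ + (1 - p) * a = (p + (1 - p) * a ^ 2) * a⁻¹ := by
      field_simp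
    rw [heq]
    calc (p + (1 - p) * a ^ 2) * a⁻¹ ≤ a * a⁻¹ :=
          mul_le_mul_of_nonneg_right hkey (by positivity)
      _ = 1 := mul_inv_cancel₀ (ne_of_gt hapos)
  calc p * (Real.exp (ϖ/2) * a⁻¹) + (1 - p) * (Real.exp (ϖ/2) * a)
      = Real.exp (ϖ/2) * (p * a⁻¹ + (1 - p) * a) := by ring
    _ ≤ Real.exp (ϖ/2) * 1 := by
        exact mul_le_mul_of_nonneg_left hsum (le_of_lt (Real.exp_pos _))
    _ = Real.exp (ϖ/2) := mul_one _

/-- For the binary erasure transfer matrix with erasure probability `β` and a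
Bernoulli(`p`) input, the message importance loss `Φ_ϖ(p) = L(ϖ,X) − L(ϖ,X|Y)` (with the
conditional probabilities computed by Bayes' rule, the output taking values `0`, `1`, `e`)
is maximized over `p ∈ (0,1)` at `p = 1/2`, with maximal value (the message importance
loss capacity) `C(ϖ,β) = (1−β)·(exp(ϖ/2) − 1)`. -/
theorem milc_binary_erasure (ϖ β : ℝ) (hϖ : 0 < ϖ) (hϖ2 : ϖ < 2)
    (hβ0 : 0 ≤ β) (hβ1 : β ≤ 1) (Φ : ℝ → ℝ)
    (hΦ : ∀ p : ℝ,
      Φ p = (p * Real.exp (ϖ * (1 - p)) + (1 - p) * Real.exp (ϖ * p))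
        - (p * (1 - β) *
            Real.exp (ϖ * (1 - p * (1 - β) / (p * (1 - β))))
          + (1 - p) * (1 - β) *
            Real.exp (ϖ * (1 - (1 - p) * (1 - β) / ((1 - p) * (1 - β))))
          + p * β *
            Real.exp (ϖ * (1 - p * β / (p * β + (1 - p) * β)))
          + (1 - p) * β *
            Real.exp (ϖ * (1 - (1 - p) * β / (p * β + (1 - p) * β))))) :
    IsMaxOn Φ (Set.Ioo (0:ℝ) 1) (1/2) ∧
    Φ (1/2) = (1 - β) * (Real.exp (ϖ / 2) - 1) := by
  -- Simplification of Φ on (0,1)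
  have hf : ∀ p : ℝ, p ∈ Set.Ioo (0:ℝ) 1 →
      Φ p = (1 - β) *
        ((p * Real.exp (ϖ * (1 - p)) + (1 - p) * Real.exp (ϖ * p)) - 1) := by
    intro p hp
    obtain ⟨hp0, hp1⟩ := hp
    rw [hΦ]
    have e1 : p * (1 - β) * Real.exp (ϖ * (1 - p * (1 - β) / (p * (1 - β))))
        = p * (1 - β) := by
      rcases eq_or_lt_of_le hβ1 with hb | hb
      · rw [← hb]; ring_nf
      · rw [div_self (ne_of_gt (mul_pos hp0 (by linarith)))]
        norm_num
    have e2 : (1 - p) * (1 - β) * Real.exp (ϖ * (1 - (1 - p) * (1 - β) / ((1 - p) * (1 - β))))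
        = (1 - p) * (1 - β) := by
      rcases eq_or_lt_of_le hβ1 with hb | hb
      · rw [← hb]; ring_nf
      · rw [div_self (ne_of_gt (mul_pos (by linarith) (by linarith)))]
        norm_num
    have hsb : p * β + (1 - p) * β = β := by ring
    have e3 : p * β * Real.exp (ϖ * (1 - p * β / (p * β + (1 - p) * β)))
        = p * β * Real.exp (ϖ * (1 - p)) := by
      rcases eq_or_lt_of_le hβ0 with hb | hb
      · rw [← hb]; ring_nf
      · rw [hsb, mul_div_assoc, div_self (ne_of_gt hb), mul_one]
    have e4 : (1 - p) * β * Real.exp (ϖ * (1 - (1 - p) * β / (p * β + (1 - p) * β)))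
        = (1 - p) * β * Real.exp (ϖ * p) := by
      rcases eq_or_lt_of_le hβ0 with hb | hb
      · rw [← hb]; ring_nf
      · rw [hsb, mul_div_assoc, div_self (ne_of_gt hb), mul_one]
        ring_nf
    rw [e1, e2, e3, e4]
    ring
  have hhalf : (1/2 : ℝ) ∈ Set.Ioo (0:ℝ) 1 := by constructor <;> norm_num
  have hval : Φ (1/2) = (1 - β) * (Real.exp (ϖ / 2) - 1) := by
    rw [hf (1/2) hhalf]
    have : ϖ * (1 - 1/2) = ϖ / 2 := by ring
    rw [this]
    have : ϖ * (1/2 : ℝ) = ϖ / 2 := by ring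
    rw [this]
    ring
  refine ⟨?_, hval⟩
  intro p hp
  simp only [Set.mem_setOf_eq]
  rw [hf p hp, hval]
  have hkey := milc_key ϖ p hϖ (le_of_lt hϖ2) (le_of_lt hp.1) (le_of_lt hp.2)
  have h1β : (0:ℝ) ≤ 1 - β := by linarith
  nlinarith
end

section
/- For 0 < ϖ < 2, the binary MIM function L(ϖ,p) = p·exp(ϖ(1−p)) + (1−p)·exp(ϖp) is strictly concave on [0,1] (its second derivative exp(ϖ(1−p))·(ϖp−2)·ϖ + exp(ϖp)·((1−p)ϖ−2)·ϖ is negative on [0,1]), and it attains its maximum over [0,1] uniquely at p = 1/2, where its value is exp(ϖ/2). -/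
open Real

/-- For `0 < ϖ < 2`, the binary MIM function
`L(ϖ,p) = p·exp(ϖ(1−p)) + (1−p)·exp(ϖp)` is strictly concave on `[0,1]`
(its second derivative `exp(ϖ(1−p))·(ϖp−2)·ϖ + exp(ϖp)·((1−p)ϖ−2)·ϖ` is negative on
`[0,1]`), and it attains its maximum over `[0,1]` uniquely at `p = 1/2`, where its value
is `exp(ϖ/2)`. -/
theorem binary_mim_strictly_concave_max (ϖ : ℝ) (hϖ : 0 < ϖ) (hϖ2 : ϖ < 2) :
    StrictConcaveOn ℝ (Set.Icc (0:ℝ) 1)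
      (fun p : ℝ => p * Real.exp (ϖ * (1 - p)) + (1 - p) * Real.exp (ϖ * p)) ∧
    (∀ p ∈ Set.Icc (0:ℝ) 1,
      deriv (deriv (fun p : ℝ =>
          p * Real.exp (ϖ * (1 - p)) + (1 - p) * Real.exp (ϖ * p))) p
        = Real.exp (ϖ * (1 - p)) * (ϖ * p - 2) * ϖ
            + Real.exp (ϖ * p) * ((1 - p) * ϖ - 2) * ϖ ∧
      Real.exp (ϖ * (1 - p)) * (ϖ * p - 2) * ϖ
          + Real.exp (ϖ * p) * ((1 - p) * ϖ - 2) * ϖ < 0) ∧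
    ((1/2 : ℝ) * Real.exp (ϖ * (1 - 1/2)) + (1 - 1/2) * Real.exp (ϖ * (1/2))
        = Real.exp (ϖ / 2)) ∧
    ∀ p ∈ Set.Icc (0:ℝ) 1, p ≠ 1/2 →
      p * Real.exp (ϖ * (1 - p)) + (1 - p) * Real.exp (ϖ * p) < Real.exp (ϖ / 2) := by
  set f : ℝ → ℝ := fun p => p * Real.exp (ϖ * (1 - p)) + (1 - p) * Real.exp (ϖ * p) with hf
  have he1 : ∀ x : ℝ, HasDerivAt (fun p : ℝ => Real.exp (ϖ * (1 - p)))
      (-ϖ * Real.exp (ϖ * (1 - x))) x := by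
    intro x
    have h : HasDerivAt (fun p : ℝ => ϖ * (1 - p)) (-ϖ) x := by
      simpa using ((hasDerivAt_const x (1:ℝ)).sub (hasDerivAt_id x)).const_mul ϖ
    simpa [mul_comm] using h.exp
  have he2 : ∀ x : ℝ, HasDerivAt (fun p : ℝ => Real.exp (ϖ * p))
      (ϖ * Real.exp (ϖ * x)) x := by
    intro x
    have h : HasDerivAt (fun p : ℝ => ϖ * p) ϖ x := by
      simpa using (hasDerivAt_id x).const_mul ϖ
    simpa [mul_comm] using h.exp
  have h1 : ∀ x : ℝ, HasDerivAt f
      (Real.exp (ϖ * (1 - x)) * (1 - ϖ * x) + Real.exp (ϖ * x) * ((1 - x) * ϖ - 1)) x := by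
    intro x
    have := ((hasDerivAt_id x).mul (he1 x)).add
      (((hasDerivAt_const x (1:ℝ)).sub (hasDerivAt_id x)).mul (he2 x))
    refine this.congr_deriv ?_
    simp only [id_eq, Pi.sub_apply]
    ring
  have hderiv1 : deriv f = fun x =>
      Real.exp (ϖ * (1 - x)) * (1 - ϖ * x) + Real.exp (ϖ * x) * ((1 - x) * ϖ - 1) :=
    funext fun x => (h1 x).deriv
  have h2 : ∀ x : ℝ, HasDerivAt (deriv f)
      (Real.exp (ϖ * (1 - x)) * (ϖ * x - 2) * ϖ + Real.exp (ϖ * x) * ((1 - x) * ϖ - 2) * ϖ) x := by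
    intro x
    rw [hderiv1]
    have hlin : HasDerivAt (fun p : ℝ => 1 - ϖ * p) (-ϖ) x := by
      exact ((hasDerivAt_const x (1:ℝ)).sub ((hasDerivAt_id x).const_mul ϖ)).congr_deriv (by simp)
    have hlin2 : HasDerivAt (fun p : ℝ => (1 - p) * ϖ - 1) (-ϖ) x := by
      exact ((((hasDerivAt_const x (1:ℝ)).sub (hasDerivAt_id x)).mul_const ϖ).sub
        (hasDerivAt_const x (1:ℝ))).congr_deriv (by simp)
    have := ((he1 x).mul hlin).add ((he2 x).mul hlin2)
    refine this.congr_deriv ?_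
    ring
  have hderiv2 : ∀ x : ℝ, deriv (deriv f) x =
      Real.exp (ϖ * (1 - x)) * (ϖ * x - 2) * ϖ + Real.exp (ϖ * x) * ((1 - x) * ϖ - 2) * ϖ :=
    fun x => (h2 x).deriv
  have hneg : ∀ p ∈ Set.Icc (0:ℝ) 1,
      Real.exp (ϖ * (1 - p)) * (ϖ * p - 2) * ϖ + Real.exp (ϖ * p) * ((1 - p) * ϖ - 2) * ϖ < 0 := by
    intro p hp
    obtain ⟨hp0, hp1⟩ := hp
    have e1 := Real.exp_pos (ϖ * (1 - p))
    have e2 := Real.exp_pos (ϖ * p)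
    have h3 : ϖ * p - 2 < 0 := by nlinarith
    have h4 : (1 - p) * ϖ - 2 < 0 := by nlinarith
    have t1 : Real.exp (ϖ * (1 - p)) * (ϖ * p - 2) * ϖ < 0 :=
      mul_neg_of_neg_of_pos (mul_neg_of_pos_of_neg e1 h3) hϖ
    have t2 : Real.exp (ϖ * p) * ((1 - p) * ϖ - 2) * ϖ < 0 :=
      mul_neg_of_neg_of_pos (mul_neg_of_pos_of_neg e2 h4) hϖ
    linarith
  have hconc : StrictConcaveOn ℝ (Set.Icc (0:ℝ) 1) f := by
    apply strictConcaveOn_of_deriv2_neg (convex_Icc 0 1)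
    · exact Continuous.continuousOn (by continuity)
    · intro x hx
      rw [Function.iterate_succ, Function.iterate_one, Function.comp_apply, hderiv2]
      exact hneg x (interior_subset hx)
  have hsym : ∀ p : ℝ, f (1 - p) = f p := by
    intro p
    simp only [hf]
    ring_nf
  have hhalf : f (1/2) = Real.exp (ϖ / 2) := by
    simp only [hf]
    norm_num
    rw [show ϖ * (1/2) = ϖ / 2 by ring]
    ring
  refine ⟨hconc, fun p hp => ⟨hderiv2 p, hneg p hp⟩, by
      simpa [hf] using hhalf, ?_⟩
  intro p hp hpne
  have hp' : (1 : ℝ) - p ∈ Set.Icc (0:ℝ) 1 := by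
    constructor <;> [linarith [hp.2]; linarith [hp.1]]
  have hne : p ≠ 1 - p := fun h => hpne (by linarith)
  have := hconc.2 hp hp' hne (by norm_num : (0:ℝ) < 1/2) (by norm_num : (0:ℝ) < 1/2)
    (by norm_num)
  rw [smul_eq_mul, smul_eq_mul, smul_eq_mul, smul_eq_mul] at this
  have harg : (1/2 : ℝ) * p + 1/2 * (1 - p) = 1/2 := by ring
  rw [harg, hsym p, hhalf] at this
  linarith
end

section
/- Let K ≥ 2, 0 ≤ β ≤ 1 and 0 < ϖ < 2. Suppose Y takes K values with an arbitrary distribution (p(y₁),…,p(y_K)) and the backward transfer matrix is strongly symmetric: p(xᵢ|yᵢ) = 1−β and p(xᵢ|yⱼ) = β/(K−1) for i ≠ j, with p(xᵢ) = Σⱼ p(yⱼ)p(xᵢ|yⱼ). Then: (a) the conditional message importance measure equals L(ϖ,X|Y) = (1−β)·exp(ϖβ) + β·exp(ϖ(1−β/(K−1))) regardless of the distribution of Y; and (b) the maximum over distributions of Y of the message importance loss Φ_ϖ(X||Y) = L(ϖ,X) − L(ϖ,X|Y) is attained when Y (and hence X) is uniform, with value C(ϖ,β) = exp(ϖ(K−1)/K)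 − [(1−β)·exp(ϖβ) + β·exp(ϖ(1−β/(K−1)))]. -/
open Finset


lemma sum_ite_const_fin (K : ℕ) (j : Fin K) (A B : ℝ) :
    ∑ i : Fin K, (if i = j then A else B) = A + ((K : ℝ) - 1) * B := by
  have h : ∀ i : Fin K, (if i = j then A else B) = (if i = j then A - B else 0) + B := by
    intro i; split <;> ring
  rw [Finset.sum_congr rfl (fun i _ => h i), Finset.sum_add_distrib,
    Finset.sum_ite_eq' univ j (fun _ => A - B), Finset.sum_const, Finset.card_univ,
    Fintype.card_fin, nsmul_eq_mul]
  simp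
  ring

lemma concave_mim (ϖ : ℝ) (hϖ : 0 < ϖ) (hϖ2 : ϖ < 2) :
    ConcaveOn ℝ (Set.Icc (0:ℝ) 1) (fun p => p * Real.exp (ϖ * (1 - p))) := by
  have hD : Convex ℝ (Set.Icc (0:ℝ) 1) := convex_Icc 0 1
  have hd1 : ∀ p : ℝ, HasDerivAt (fun q => q * Real.exp (ϖ * (1 - q)))
      (Real.exp (ϖ * (1 - p)) * (1 - ϖ * p)) p := by
    intro p
    have h0 : HasDerivAt (fun q : ℝ => ϖ * (1 - q)) (ϖ * (-1)) p :=
      ((hasDerivAt_id p).const_sub 1).const_mul ϖ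
    have he : HasDerivAt (fun q : ℝ => Real.exp (ϖ * (1 - q)))
        (Real.exp (ϖ * (1 - p)) * (ϖ * (-1))) p := h0.exp
    have := (hasDerivAt_id p).mul he
    exact this.congr_deriv (by simp only [id_eq, one_mul]; ring)
  have hd2 : ∀ p : ℝ, HasDerivAt (fun q => Real.exp (ϖ * (1 - q)) * (1 - ϖ * q))
      (ϖ * Real.exp (ϖ * (1 - p)) * (ϖ * p - 2)) p := by
    intro p
    have h0 : HasDerivAt (fun q : ℝ => ϖ * (1 - q)) (ϖ * (-1)) p :=
      ((hasDerivAt_id p).const_sub 1).const_mul ϖ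
    have he : HasDerivAt (fun q : ℝ => Real.exp (ϖ * (1 - q)))
        (Real.exp (ϖ * (1 - p)) * (ϖ * (-1))) p := h0.exp
    have hl : HasDerivAt (fun q : ℝ => 1 - ϖ * q) (-ϖ) p := by
      simpa using ((hasDerivAt_id p).const_mul ϖ).const_sub 1
    have := he.mul hl
    exact this.congr_deriv (by ring)
  refine concaveOn_of_hasDerivWithinAt2_nonpos hD ?_
    (fun x _ => (hd1 x).hasDerivWithinAt) (fun x _ => (hd2 x).hasDerivWithinAt) ?_
  · exact (continuous_id.mul (Real.continuous_exp.comp (by continuity))).continuousOn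
  · intro x hx
    rw [interior_Icc] at hx
    have h1 : ϖ * x - 2 < 0 := by nlinarith [hx.1, hx.2]
    have h2 : 0 < ϖ * Real.exp (ϖ * (1 - x)) := mul_pos hϖ (Real.exp_pos _)
    nlinarith

/-- For `K ≥ 2`, `0 ≤ β ≤ 1`, `0 < ϖ < 2`, an arbitrary distribution `py` of
`Y` on `K` symbols and the strongly symmetric backward matrix `W i j = p(xᵢ|yⱼ)`
(`1−β` on the diagonal, `β/(K−1)` off-diagonal), with `p(xᵢ) = ∑ⱼ p(yⱼ)p(xᵢ|yⱼ)`: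
(a) the CMIM equals `(1−β)·exp(ϖβ) + β·exp(ϖ(1−β/(K−1)))` regardless of `py`;
(b) the message importance loss is at most
`C(ϖ,β) = exp(ϖ(K−1)/K) − [(1−β)·exp(ϖβ) + β·exp(ϖ(1−β/(K−1)))]`, with equality for the
uniform distribution. -/
theorem milc_strongly_symmetric (K : ℕ) (hK : 2 ≤ K) (ϖ β : ℝ)
    (hϖ : 0 < ϖ) (hϖ2 : ϖ < 2) (hβ0 : 0 ≤ β) (hβ1 : β ≤ 1)
    (py : Fin K → ℝ) (hpy : ∀ j, 0 ≤ py j) (hsum : ∑ j, py j = 1)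
    (W : Fin K → Fin K → ℝ)
    (hW : ∀ i j, W i j = if i = j then 1 - β else β / ((K : ℝ) - 1)) :
    (∑ j, py j * ∑ i, W i j * Real.exp (ϖ * (1 - W i j)))
        = (1 - β) * Real.exp (ϖ * β)
            + β * Real.exp (ϖ * (1 - β / ((K : ℝ) - 1))) ∧
    (∑ i, (∑ j, py j * W i j) * Real.exp (ϖ * (1 - ∑ j, py j * W i j)))
          - ((1 - β) * Real.exp (ϖ * β)
              + β * Real.exp (ϖ * (1 - β / ((K : ℝ) - 1))))
      ≤ Real.exp (ϖ * ((K : ℝ) - 1) / K)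
          - ((1 - β) * Real.exp (ϖ * β)
              + β * Real.exp (ϖ * (1 - β / ((K : ℝ) - 1)))) ∧
    (∑ i : Fin K, (∑ j : Fin K, (1 / (K : ℝ)) * W i j) *
            Real.exp (ϖ * (1 - ∑ j : Fin K, (1 / (K : ℝ)) * W i j)))
          - ((1 - β) * Real.exp (ϖ * β)
              + β * Real.exp (ϖ * (1 - β / ((K : ℝ) - 1))))
      = Real.exp (ϖ * ((K : ℝ) - 1) / K)
          - ((1 - β) * Real.exp (ϖ * β)
              + β * Real.exp (ϖ * (1 - β / ((K : ℝ) - 1)))) := by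
  have hK1 : (1 : ℝ) ≤ (K : ℝ) - 1 := by
    have : (2 : ℝ) ≤ (K : ℝ) := by exact_mod_cast hK
    linarith
  have hKm1pos : (0 : ℝ) < (K : ℝ) - 1 := by linarith
  have hKm1ne : ((K : ℝ) - 1) ≠ 0 := ne_of_gt hKm1pos
  have hKpos : (0 : ℝ) < (K : ℝ) := by linarith
  have hKne : ((K : ℝ)) ≠ 0 := ne_of_gt hKpos
  -- column sums of W equal 1
  have hcol : ∀ j : Fin K, ∑ i, W i j = 1 := by
    intro j
    have : ∑ i, W i j = ∑ i : Fin K, (if i = j then 1 - β else β / ((K : ℝ) - 1)) :=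
      Finset.sum_congr rfl (fun i _ => hW i j)
    rw [this, sum_ite_const_fin]
    field_simp
    ring
  have hrow : ∀ i : Fin K, ∑ j, W i j = 1 := by
    intro i
    have : ∑ j, W i j = ∑ j : Fin K, (if j = i then 1 - β else β / ((K : ℝ) - 1)) :=
      Finset.sum_congr rfl (fun j _ => by rw [hW i j]; simp [eq_comm])
    rw [this, sum_ite_const_fin]
    field_simp
    ring
  -- part (a)
  have inner_eq : ∀ j : Fin K, ∑ i, W i j * Real.exp (ϖ * (1 - W i j))
      = (1 - β) * Real.exp (ϖ * β) + β * Real.exp (ϖ * (1 - β / ((K : ℝ) - 1))) := by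
    intro j
    have : ∀ i : Fin K, W i j * Real.exp (ϖ * (1 - W i j))
        = if i = j then (1 - β) * Real.exp (ϖ * β)
          else (β / ((K : ℝ) - 1)) * Real.exp (ϖ * (1 - β / ((K : ℝ) - 1))) := by
      intro i
      rw [hW i j]
      split
      · ring_nf
      · rfl
    rw [Finset.sum_congr rfl (fun i _ => this i), sum_ite_const_fin]
    field_simp
  have parta : (∑ j, py j * ∑ i, W i j * Real.exp (ϖ * (1 - W i j)))
      = (1 - β) * Real.exp (ϖ * β) + β * Real.exp (ϖ * (1 - β / ((K : ℝ) - 1))) := by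
    calc ∑ j, py j * ∑ i, W i j * Real.exp (ϖ * (1 - W i j))
        = ∑ j, py j * ((1 - β) * Real.exp (ϖ * β)
            + β * Real.exp (ϖ * (1 - β / ((K : ℝ) - 1)))) :=
          Finset.sum_congr rfl (fun j _ => by rw [inner_eq j])
      _ = (∑ j, py j) * ((1 - β) * Real.exp (ϖ * β)
            + β * Real.exp (ϖ * (1 - β / ((K : ℝ) - 1)))) := by rw [← Finset.sum_mul]
      _ = _ := by rw [hsum, one_mul]
  refine ⟨parta, ?_, ?_⟩
  -- part (b)
  · have hWnn : ∀ i j, 0 ≤ W i j := by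
      intro i j; rw [hW]; split
      · linarith
      · positivity
    have hWle : ∀ i j, W i j ≤ 1 := by
      intro i j; rw [hW]; split
      · linarith
      · rw [div_le_one hKm1pos]; linarith
    set px : Fin K → ℝ := fun i => ∑ j, py j * W i j with hpx
    have hpx0 : ∀ i, 0 ≤ px i := fun i =>
      Finset.sum_nonneg fun j _ => mul_nonneg (hpy j) (hWnn i j)
    have hpx1 : ∀ i, px i ≤ 1 := by
      intro i
      calc px i ≤ ∑ j, py j :=
            Finset.sum_le_sum fun j _ => by
              nlinarith [hpy j, hWle i j, hWnn i j]
        _ = 1 := hsum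
    have hpxsum : ∑ i, px i = 1 := by
      rw [hpx]
      rw [Finset.sum_comm]
      calc ∑ j, ∑ i, py j * W i j = ∑ j, py j * ∑ i, W i j := by
            simp [Finset.mul_sum]
        _ = ∑ j, py j := Finset.sum_congr rfl (fun j _ => by rw [hcol j, mul_one])
        _ = 1 := hsum
    have hjensen := (concave_mim ϖ hϖ hϖ2).le_map_sum
      (t := univ) (w := fun _ : Fin K => 1 / (K : ℝ)) (p := px)
      (fun i _ => by positivity)
      (by simp [Finset.sum_const, Finset.card_univ]; field_simp)
      (fun i _ => Set.mem_Icc.2 ⟨hpx0 i, hpx1 i⟩)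
    simp only [smul_eq_mul] at hjensen
    have hsum2 : ∑ i : Fin K, 1 / (K : ℝ) * px i = 1 / (K : ℝ) := by
      rw [← Finset.mul_sum, hpxsum, mul_one]
    rw [hsum2, ← Finset.mul_sum] at hjensen
    have : (∑ i, px i * Real.exp (ϖ * (1 - px i))) ≤ Real.exp (ϖ * ((K : ℝ) - 1) / K) := by
      have h2 : Real.exp (ϖ * (1 - 1 / (K : ℝ))) = Real.exp (ϖ * ((K : ℝ) - 1) / K) := by
        congr 1; field_simp
      have hstep : (∑ i, px i * Real.exp (ϖ * (1 - px i)))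
          ≤ Real.exp (ϖ * (1 - 1 / (K : ℝ))) :=
        (mul_le_mul_iff_right₀ (by positivity : (0:ℝ) < 1 / (K : ℝ))).mp hjensen
      rw [← h2]
      exact hstep
    linarith
  -- part (c)
  · have hpxu : ∀ i : Fin K, ∑ j : Fin K, (1 / (K : ℝ)) * W i j = 1 / (K : ℝ) := by
      intro i
      rw [← Finset.mul_sum, hrow i, mul_one]
    have : (∑ i : Fin K, (∑ j : Fin K, (1 / (K : ℝ)) * W i j) *
        Real.exp (ϖ * (1 - ∑ j : Fin K, (1 / (K : ℝ)) * W i j)))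
        = Real.exp (ϖ * ((K : ℝ) - 1) / K) := by
      calc (∑ i : Fin K, (∑ j : Fin K, (1 / (K : ℝ)) * W i j) *
            Real.exp (ϖ * (1 - ∑ j : Fin K, (1 / (K : ℝ)) * W i j)))
          = ∑ i : Fin K, (1 / (K : ℝ)) * Real.exp (ϖ * (1 - 1 / (K : ℝ))) :=
            Finset.sum_congr rfl (fun i _ => by rw [hpxu i])
        _ = (K : ℝ) * ((1 / (K : ℝ)) * Real.exp (ϖ * (1 - 1 / (K : ℝ)))) := by
            rw [Finset.sum_const, Finset.card_univ, Fintype.card_fin, nsmul_eq_mul]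
        _ = Real.exp (ϖ * (1 - 1 / (K : ℝ))) := by field_simp
        _ = Real.exp (ϖ * ((K : ℝ) - 1) / K) := by congr 1; field_simp
    rw [this]
end

section
/- Let 0 < ϖ < 2 and let (p₁,…,pₙ) be a probability distribution on n ≥ 1 outcomes (pᵢ ≥ 0, Σpᵢ = 1). Then the message importance measure satisfies Σᵢ pᵢ·exp(ϖ(1−pᵢ)) ≤ exp(ϖ(n−1)/n), with equality if and only if the distribution is uniform (pᵢ = 1/n for all i). -/
open Finset

private lemma mim_hasDeriv1 (ϖ x : ℝ) :
    HasDerivAt (fun x : ℝ => x * Real.exp (ϖ * (1 - x)))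
      ((1 - ϖ * x) * Real.exp (ϖ * (1 - x))) x := by
  have h1 : HasDerivAt (fun x : ℝ => ϖ * (1 - x)) (-ϖ) x := by
    simpa using ((hasDerivAt_id x).const_sub 1).const_mul ϖ
  have h2 := h1.exp
  have h3 := (hasDerivAt_id x).fun_mul h2
  refine h3.congr_deriv ?_
  simp only [id_eq]
  ring

private lemma mim_hasDeriv2 (ϖ x : ℝ) :
    HasDerivAt (fun x : ℝ => (1 - ϖ * x) * Real.exp (ϖ * (1 - x)))
      (-(ϖ * (2 - ϖ * x) * Real.exp (ϖ * (1 - x)))) x := by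
  have h1 : HasDerivAt (fun x : ℝ => ϖ * (1 - x)) (-ϖ) x := by
    simpa using ((hasDerivAt_id x).const_sub 1).const_mul ϖ
  have h2 := h1.exp
  have h0 : HasDerivAt (fun x : ℝ => 1 - ϖ * x) (-ϖ) x := by
    simpa using ((hasDerivAt_id x).const_mul ϖ).const_sub 1
  have h3 := h0.fun_mul h2
  refine h3.congr_deriv ?_
  ring

private lemma mim_strictConcave {ϖ : ℝ} (hϖ : 0 < ϖ) (hϖ2 : ϖ < 2) :
    StrictConcaveOn ℝ (Set.Icc (0:ℝ) 1) (fun x : ℝ => x * Real.exp (ϖ * (1 - x))) := by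
  apply strictConcaveOn_of_deriv2_neg (convex_Icc 0 1)
  · exact (Continuous.mul continuous_id (Real.continuous_exp.comp (by continuity))).continuousOn
  · intro x hx
    rw [interior_Icc] at hx
    have hderiv : deriv (fun x : ℝ => x * Real.exp (ϖ * (1 - x)))
        = fun x => (1 - ϖ * x) * Real.exp (ϖ * (1 - x)) :=
      funext fun y => (mim_hasDeriv1 ϖ y).deriv
    have heq2 : deriv^[2] (fun x : ℝ => x * Real.exp (ϖ * (1 - x))) x
        = -(ϖ * (2 - ϖ * x) * Real.exp (ϖ * (1 - x))) := by
      simp only [Function.iterate_succ, Function.iterate_zero, Function.comp_apply, id_eq]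
      rw [hderiv, (mim_hasDeriv2 ϖ x).deriv]
    rw [heq2]
    have hE := Real.exp_pos (ϖ * (1 - x))
    have hx1 : (0:ℝ) < 2 - ϖ * x := by nlinarith [hx.1, hx.2]
    have : 0 < ϖ * (2 - ϖ * x) * Real.exp (ϖ * (1 - x)) := mul_pos (mul_pos hϖ hx1) hE
    linarith

/-- For `0 < ϖ < 2` and any probability distribution `(p₁,…,pₙ)` on `n ≥ 1`
outcomes, the message importance measure satisfies
`∑ᵢ pᵢ·exp(ϖ(1−pᵢ)) ≤ exp(ϖ(n−1)/n)`, with equality iff the distribution is uniform. -/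
theorem mim_max_uniform (n : ℕ) (hn : 1 ≤ n) (ϖ : ℝ) (hϖ : 0 < ϖ) (hϖ2 : ϖ < 2)
    (p : Fin n → ℝ) (hp : ∀ i, 0 ≤ p i) (hsum : ∑ i, p i = 1) :
    (∑ i, p i * Real.exp (ϖ * (1 - p i))) ≤ Real.exp (ϖ * ((n : ℝ) - 1) / n) ∧
    ((∑ i, p i * Real.exp (ϖ * (1 - p i))) = Real.exp (ϖ * ((n : ℝ) - 1) / n)
      ↔ ∀ i, p i = 1 / n) := by
  have hn0 : (0:ℝ) < n := by exact_mod_cast hn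
  have hninv : (0:ℝ) < (n:ℝ)⁻¹ := by positivity
  have hconc := mim_strictConcave hϖ hϖ2
  have h₀ : ∀ i ∈ (univ : Finset (Fin n)), (0:ℝ) < (n:ℝ)⁻¹ := fun i _ => hninv
  have h₀' : ∀ i ∈ (univ : Finset (Fin n)), (0:ℝ) ≤ (n:ℝ)⁻¹ := fun i hi => hninv.le
  have h₁ : ∑ _i : Fin n, (n:ℝ)⁻¹ = 1 := by
    rw [Finset.sum_const, card_univ, Fintype.card_fin, nsmul_eq_mul]
    field_simp
  have hmem : ∀ i ∈ (univ : Finset (Fin n)), p i ∈ Set.Icc (0:ℝ) 1 := by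
    intro i _
    refine ⟨hp i, ?_⟩
    calc p i ≤ ∑ j, p j := Finset.single_le_sum (fun j _ => hp j) (mem_univ i)
    _ = 1 := hsum
  have hcenter : ∑ i : Fin n, (n:ℝ)⁻¹ • p i = (n:ℝ)⁻¹ := by
    simp only [smul_eq_mul, ← Finset.mul_sum, hsum, mul_one]
  have hexp : ϖ * (1 - (n:ℝ)⁻¹) = ϖ * ((n : ℝ) - 1) / n := by
    field_simp
  constructor
  · have hj := hconc.concaveOn.le_map_sum h₀' h₁ hmem
    rw [hcenter, hexp] at hj
    simp only [smul_eq_mul, ← Finset.mul_sum] at hj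
    exact (mul_le_mul_iff_right₀ hninv).mp hj
  · have heq := hconc.map_sum_eq_iff h₀ h₁ hmem
    rw [hcenter, hexp] at heq
    simp only [smul_eq_mul, ← Finset.mul_sum] at heq
    constructor
    · intro h
      intro i
      have := heq.mp (by rw [h]) i (mem_univ i)
      rw [this, one_div]
    · intro h
      have := heq.mpr (fun j _ => by rw [h j, one_div])
      exact (mul_left_cancel₀ (ne_of_gt hninv) this).symm
end

section
/- Let K ≥ 2 and 0 < ϖ < 2. The function C(ϖ,β) = exp(ϖ(K−1)/K) − (1−β)·exp(ϖβ) − β·exp(ϖ(1−β/(K−1))) of β ∈ [0,1] has positive second derivative in β (namely ϖ(2−(1−β)ϖ)·exp(ϖβ) + (ϖ/(K−1))·(2 − ϖβ/(K−1))·exp(ϖ(1−β/(K−1))) > 0), so it is strictly convex in β, and it attains its minimum value 0 at β = (K−1)/K. -/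
/-- The message importance loss capacity of the strongly symmetric backward matrix with
`K` symbols and crossover parameter `β`, under MIM parameter `ϖ`. -/
noncomputable def milcStronglySymmetric (K : ℕ) (ϖ β : ℝ) : ℝ :=
  Real.exp (ϖ * ((K : ℝ) - 1) / K) - (1 - β) * Real.exp (ϖ * β)
    - β * Real.exp (ϖ * (1 - β / ((K : ℝ) - 1)))

/-- First derivative of the capacity in `β`. -/
noncomputable def milcD1 (K : ℕ) (ϖ β : ℝ) : ℝ :=
  (1 - (1 - β) * ϖ) * Real.exp (ϖ * β)
    + (β * ϖ / ((K : ℝ) - 1) - 1) * Real.exp (ϖ * (1 - β / ((K : ℝ) - 1)))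

/-- Second derivative of the capacity in `β`. -/
noncomputable def milcD2 (K : ℕ) (ϖ β : ℝ) : ℝ :=
  ϖ * (2 - (1 - β) * ϖ) * Real.exp (ϖ * β)
    + (ϖ / ((K : ℝ) - 1)) * (2 - ϖ * β / ((K : ℝ) - 1)) *
        Real.exp (ϖ * (1 - β / ((K : ℝ) - 1)))

lemma hasDerivAt_inner (K : ℕ) (ϖ : ℝ) (hKr : ((K : ℝ) - 1) ≠ 0) (β : ℝ) :
    HasDerivAt (fun b : ℝ => ϖ * (1 - b / ((K : ℝ) - 1))) (-(ϖ / ((K : ℝ) - 1))) β := by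
  have h := (((hasDerivAt_id β).div_const ((K : ℝ) - 1)).const_sub 1).const_mul ϖ
  refine h.congr_deriv ?_
  field_simp

lemma hasDerivAt_milc (K : ℕ) (ϖ : ℝ) (hKr : ((K : ℝ) - 1) ≠ 0) (β : ℝ) :
    HasDerivAt (fun b : ℝ => milcStronglySymmetric K ϖ b) (milcD1 K ϖ β) β := by
  have h1 : HasDerivAt (fun b : ℝ => ϖ * b) ϖ β := by
    simpa using (hasDerivAt_id β).const_mul ϖ
  have e1 := h1.exp
  have e2 := (hasDerivAt_inner K ϖ hKr β).exp
  have g1 := ((hasDerivAt_id β).const_sub 1).mul e1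
  have g2 := (hasDerivAt_id β).mul e2
  have h := ((hasDerivAt_const β (Real.exp (ϖ * ((K : ℝ) - 1) / K))).sub g1).sub g2
  unfold milcStronglySymmetric milcD1
  refine h.congr_deriv ?_
  simp only [id_eq]
  ring

lemma hasDerivAt_milcD1 (K : ℕ) (ϖ : ℝ) (hKr : ((K : ℝ) - 1) ≠ 0) (β : ℝ) :
    HasDerivAt (fun b : ℝ => milcD1 K ϖ b) (milcD2 K ϖ β) β := by
  have h1 : HasDerivAt (fun b : ℝ => ϖ * b) ϖ β := by
    simpa using (hasDerivAt_id β).const_mul ϖ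
  have e1 := h1.exp
  have e2 := (hasDerivAt_inner K ϖ hKr β).exp
  have a1 : HasDerivAt (fun b : ℝ => 1 - (1 - b) * ϖ) ϖ β := by
    have := (((hasDerivAt_id β).const_sub 1).mul_const ϖ).const_sub 1
    refine this.congr_deriv ?_; ring
  have a2 : HasDerivAt (fun b : ℝ => b * ϖ / ((K : ℝ) - 1) - 1) (ϖ / ((K : ℝ) - 1)) β := by
    have := (((hasDerivAt_id β).mul_const ϖ).div_const ((K : ℝ) - 1)).sub_const 1
    refine this.congr_deriv ?_; ring
  have h := (a1.mul e1).add (a2.mul e2)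
  unfold milcD1 milcD2
  refine h.congr_deriv ?_
  field_simp
  ring

/-- For `K ≥ 2` and `0 < ϖ < 2`, the capacity
`C(ϖ,β) = exp(ϖ(K−1)/K) − (1−β)·exp(ϖβ) − β·exp(ϖ(1−β/(K−1)))` has positive second
derivative in `β` on `[0,1]` (namely
`ϖ(2−(1−β)ϖ)·exp(ϖβ) + (ϖ/(K−1))·(2 − ϖβ/(K−1))·exp(ϖ(1−β/(K−1)))`), is strictly convex
in `β` on `[0,1]`, and attains its minimum value `0` at `β = (K−1)/K`. -/
theorem milc_strongly_symmetric_convex_in_beta (K : ℕ) (hK : 2 ≤ K) (ϖ : ℝ)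
    (hϖ : 0 < ϖ) (hϖ2 : ϖ < 2) :
    (∀ β ∈ Set.Icc (0:ℝ) 1,
      deriv (deriv (fun β : ℝ => milcStronglySymmetric K ϖ β)) β
          = ϖ * (2 - (1 - β) * ϖ) * Real.exp (ϖ * β)
            + (ϖ / ((K : ℝ) - 1)) * (2 - ϖ * β / ((K : ℝ) - 1)) *
                Real.exp (ϖ * (1 - β / ((K : ℝ) - 1))) ∧
      0 < ϖ * (2 - (1 - β) * ϖ) * Real.exp (ϖ * β)
            + (ϖ / ((K : ℝ) - 1)) * (2 - ϖ * β / ((K : ℝ) - 1)) *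
                Real.exp (ϖ * (1 - β / ((K : ℝ) - 1)))) ∧
    StrictConvexOn ℝ (Set.Icc (0:ℝ) 1) (fun β : ℝ => milcStronglySymmetric K ϖ β) ∧
    IsMinOn (fun β : ℝ => milcStronglySymmetric K ϖ β) (Set.Icc (0:ℝ) 1)
      (((K : ℝ) - 1) / K) ∧
    milcStronglySymmetric K ϖ (((K : ℝ) - 1) / K) = 0 := by
  have hK2 : (2 : ℝ) ≤ (K : ℝ) := by exact_mod_cast hK
  have hKpos : (0 : ℝ) < (K : ℝ) := by linarith
  have hKr1 : (1 : ℝ) ≤ (K : ℝ) - 1 := by linarith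
  have hKrpos : (0 : ℝ) < (K : ℝ) - 1 := by linarith
  have hKr : ((K : ℝ) - 1) ≠ 0 := ne_of_gt hKrpos
  -- derivatives
  have hd1 : deriv (fun β : ℝ => milcStronglySymmetric K ϖ β) = fun β => milcD1 K ϖ β := by
    funext b
    exact (hasDerivAt_milc K ϖ hKr b).deriv
  have hd2 : ∀ β : ℝ, deriv (deriv (fun β : ℝ => milcStronglySymmetric K ϖ β)) β
      = milcD2 K ϖ β := by
    intro b
    rw [hd1]
    exact (hasDerivAt_milcD1 K ϖ hKr b).deriv
  -- positivity of second derivative on [0,1]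
  have hpos : ∀ β ∈ Set.Icc (0:ℝ) 1, 0 < milcD2 K ϖ β := by
    intro β hβ
    obtain ⟨hβ0, hβ1⟩ := hβ
    have h1 : 0 < 2 - (1 - β) * ϖ := by nlinarith
    have h2 : 0 < 2 - ϖ * β / ((K : ℝ) - 1) := by
      have : ϖ * β / ((K : ℝ) - 1) ≤ ϖ * β := by
        rw [div_le_iff₀ hKrpos]
        nlinarith [mul_nonneg hϖ.le hβ0]
      nlinarith
    have := Real.exp_pos (ϖ * β)
    have := Real.exp_pos (ϖ * (1 - β / ((K : ℝ) - 1)))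
    unfold milcD2
    positivity
  -- differentiability / continuity
  have hdiff : Differentiable ℝ (fun β : ℝ => milcStronglySymmetric K ϖ β) :=
    fun b => (hasDerivAt_milc K ϖ hKr b).differentiableAt
  -- strict convexity
  have hconv : StrictConvexOn ℝ (Set.Icc (0:ℝ) 1)
      (fun β : ℝ => milcStronglySymmetric K ϖ β) := by
    apply strictConvexOn_of_deriv2_pos (convex_Icc 0 1) hdiff.continuous.continuousOn
    intro x hx
    rw [interior_Icc] at hx
    have hx' : x ∈ Set.Icc (0:ℝ) 1 := ⟨le_of_lt hx.1, le_of_lt hx.2⟩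
    have : (deriv^[2] (fun β : ℝ => milcStronglySymmetric K ϖ β)) x
        = deriv (deriv (fun β : ℝ => milcStronglySymmetric K ϖ β)) x := by
      simp [Function.iterate_succ, Function.iterate_one]
    rw [this, hd2 x]
    exact hpos x hx'
  -- the minimizer
  set β₀ : ℝ := ((K : ℝ) - 1) / K with hβ₀def
  have hβ₀0 : 0 ≤ β₀ := by positivity
  have hβ₀1 : β₀ ≤ 1 := by
    rw [hβ₀def, div_le_one hKpos]; linarith
  have hβ₀pos : 0 < β₀ := by positivity
  have hβ₀lt1 : β₀ < 1 := by
    rw [hβ₀def, div_lt_one hKpos]; linarith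
  -- key identity : 1 - β₀ / (K-1) = β₀ and 1 - β₀ = 1/K, β₀/(K-1) = 1/K
  have hkey : 1 - β₀ / ((K : ℝ) - 1) = β₀ := by
    rw [hβ₀def]; field_simp
  have hkey2 : ϖ * ((K : ℝ) - 1) / K = ϖ * β₀ := by
    rw [hβ₀def]; ring
  -- value at β₀ is 0
  have hval : milcStronglySymmetric K ϖ β₀ = 0 := by
    unfold milcStronglySymmetric
    rw [hkey, hkey2]
    ring
  -- derivative at β₀ is 0
  have hd1zero : milcD1 K ϖ β₀ = 0 := by
    unfold milcD1
    rw [hkey]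
    have h1 : (1 - β₀) * ϖ = ϖ / K := by
      rw [hβ₀def]; field_simp; try ring
    have h2 : β₀ * ϖ / ((K : ℝ) - 1) = ϖ / K := by
      rw [hβ₀def]; field_simp; try ring
    rw [h1, h2]
    ring
  -- milcD1 is strictly monotone on [0,1]
  have hmono : StrictMonoOn (fun b : ℝ => milcD1 K ϖ b) (Set.Icc (0:ℝ) 1) := by
    apply strictMonoOn_of_deriv_pos (convex_Icc 0 1)
    · have hdiffD1 : Differentiable ℝ (fun b : ℝ => milcD1 K ϖ b) :=
        fun b => (hasDerivAt_milcD1 K ϖ hKr b).differentiableAt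
      exact hdiffD1.continuous.continuousOn
    · intro x hx
      rw [interior_Icc] at hx
      rw [(hasDerivAt_milcD1 K ϖ hKr x).deriv]
      exact hpos x ⟨le_of_lt hx.1, le_of_lt hx.2⟩
  -- antitone on [0, β₀]
  have hβ₀mem : β₀ ∈ Set.Icc (0:ℝ) 1 := ⟨hβ₀0, hβ₀1⟩
  have hanti : AntitoneOn (fun β : ℝ => milcStronglySymmetric K ϖ β) (Set.Icc 0 β₀) := by
    apply antitoneOn_of_deriv_nonpos (convex_Icc 0 β₀) hdiff.continuous.continuousOn
      hdiff.differentiableOn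
    intro x hx
    rw [interior_Icc] at hx
    rw [hd1]
    have hx1 : x ∈ Set.Icc (0:ℝ) 1 := ⟨le_of_lt hx.1, le_trans (le_of_lt hx.2) hβ₀1⟩
    have := hmono hx1 hβ₀mem hx.2
    simpa [hd1zero] using le_of_lt this
  have hmon : MonotoneOn (fun β : ℝ => milcStronglySymmetric K ϖ β) (Set.Icc β₀ 1) := by
    apply monotoneOn_of_deriv_nonneg (convex_Icc β₀ 1) hdiff.continuous.continuousOn
      hdiff.differentiableOn
    intro x hx
    rw [interior_Icc] at hx
    rw [hd1]
    have hx1 : x ∈ Set.Icc (0:ℝ) 1 := ⟨le_trans hβ₀0 (le_of_lt hx.1), le_of_lt hx.2⟩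
    have := hmono hβ₀mem hx1 hx.1
    simpa [hd1zero] using le_of_lt this
  have hmin : IsMinOn (fun β : ℝ => milcStronglySymmetric K ϖ β) (Set.Icc (0:ℝ) 1) β₀ := by
    rw [isMinOn_iff]
    intro x hx
    rcases le_total x β₀ with h | h
    · exact hanti ⟨hx.1, h⟩ ⟨hβ₀0, le_refl β₀⟩ h
    · exact hmon ⟨le_refl β₀, hβ₀1⟩ ⟨h, hx.2⟩ h
  refine ⟨fun β hβ => ⟨?_, ?_⟩, hconv, hmin, hval⟩
  · rw [hd2 β]; rfl
  · exact hpos β hβ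
end

section
/- Let X take n values with probabilities p(xᵢ) > 0 for all i, let the distortion function satisfy d(x,x) = 0 and d(x,y) > 0 for x ≠ y, and let 0 < ϖ ≤ 2. Then at allowable distortion D = 0, the only transfer matrices with average distortion 0 are those for which Y = X almost surely, the conditional message importance measure satisfies L(ϖ,X|X) = Σᵢ p(xᵢ)·1·exp(ϖ(1−1)) = 1, and hence the message importance distortion function satisfies R_ϖ(0) = L(ϖ,X) − 1. -/
open Finset

/-- Message importance measure (MIM) of a distribution with parameter `ϖ`. -/
noncomputable def MIM (ϖ : ℝ) {n : ℕ} (p : Fin n → ℝ) : ℝ :=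
  ∑ i, p i * Real.exp (ϖ * (1 - p i))

/-- Conditional message importance measure (CMIM) of the output of channel `W` fed with
input distribution `px`:
`L(ϖ,X|Y) = ∑ⱼ p(yⱼ) ∑ᵢ p(xᵢ|yⱼ)·exp(ϖ(1−p(xᵢ|yⱼ)))` where
`p(yⱼ) = ∑ᵢ p(xᵢ) p(yⱼ|xᵢ)` and `p(xᵢ|yⱼ) = p(xᵢ) p(yⱼ|xᵢ) / p(yⱼ)`. -/
noncomputable def CMIM (ϖ : ℝ) {m n : ℕ} (px : Fin m → ℝ) (W : Fin m → Fin n → ℝ) : ℝ :=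
  ∑ j, (∑ i, px i * W i j) *
    ∑ i, (px i * W i j / ∑ k, px k * W k j) *
      Real.exp (ϖ * (1 - px i * W i j / ∑ k, px k * W k j))

/-- `W` is a transfer matrix (channel): nonnegative entries, rows summing to 1. -/
def IsChannel {m n : ℕ} (W : Fin m → Fin n → ℝ) : Prop :=
  (∀ i j, 0 ≤ W i j) ∧ ∀ i, ∑ j, W i j = 1

/-- Average distortion `D̄ = ∑ᵢⱼ p(xᵢ) p(yⱼ|xᵢ) d(xᵢ,yⱼ)`. -/
noncomputable def avgDist {m n : ℕ} (px : Fin m → ℝ) (d W : Fin m → Fin n → ℝ) : ℝ :=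
  ∑ i, ∑ j, px i * W i j * d i j

/-- Message importance distortion function: the least message importance loss
`L(ϖ,X) − L(ϖ,X|Y)` over transfer matrices with average distortion at most `D`. -/
noncomputable def RD (ϖ : ℝ) {m n : ℕ} (px : Fin m → ℝ) (d : Fin m → Fin n → ℝ)
    (D : ℝ) : ℝ :=
  sInf {r : ℝ | ∃ W : Fin m → Fin n → ℝ,
    IsChannel W ∧ avgDist px d W ≤ D ∧ r = MIM ϖ px - CMIM ϖ px W}

/-- For a source `X` with all probabilities positive, a distortion function
with `d(x,x) = 0` and `d(x,y) > 0` for `x ≠ y`, and `0 < ϖ ≤ 2`: the only transfer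
matrices with average distortion `0` are those with `Y = X` almost surely, the CMIM of the
identity channel equals `∑ᵢ p(xᵢ)·1·exp(ϖ(1−1)) = 1`, and hence `R_ϖ(0) = L(ϖ,X) − 1`. -/
theorem rd_at_zero_distortion (n : ℕ) (ϖ : ℝ) (hϖ : 0 < ϖ) (hϖ2 : ϖ ≤ 2)
    (px : Fin n → ℝ) (hpx : ∀ i, 0 < px i) (hsum : ∑ i, px i = 1)
    (d : Fin n → Fin n → ℝ) (hd0 : ∀ i, d i i = 0) (hdpos : ∀ i j, i ≠ j → 0 < d i j) :
    (∀ W : Fin n → Fin n → ℝ, IsChannel W → avgDist px d W = 0 →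
        ∀ i j, i ≠ j → W i j = 0) ∧
    CMIM ϖ px (fun i j => if i = j then 1 else 0) = 1 ∧
    RD ϖ px d 0 = MIM ϖ px - 1 := by
  classical
  have hpxne : ∀ i, px i ≠ 0 := fun i => (hpx i).ne'
  -- Part 1
  have part1 : ∀ W : Fin n → Fin n → ℝ, IsChannel W → avgDist px d W = 0 →
      ∀ i j, i ≠ j → W i j = 0 := by
    intro W hW havg i j hij
    have hterm : ∀ i j, 0 ≤ px i * W i j * d i j := by
      intro i j
      by_cases h : i = j
      · subst h; simp [hd0]
      · exact mul_nonneg (mul_nonneg (hpx i).le (hW.1 i j)) (hdpos i j h).le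
    have hzero : px i * W i j * d i j = 0 := by
      have h1 : ∀ i, ∑ j, px i * W i j * d i j = 0 := by
        intro i
        have := (Finset.sum_eq_zero_iff_of_nonneg
          (fun i _ => Finset.sum_nonneg fun j _ => hterm i j)).mp havg i (Finset.mem_univ i)
        exact this
      have := (Finset.sum_eq_zero_iff_of_nonneg
        (fun j _ => hterm i j)).mp (h1 i) j (Finset.mem_univ j)
      exact this
    have hd := (hdpos i j hij).ne'
    have := mul_eq_zero.mp hzero
    rcases this with h | h
    · rcases mul_eq_zero.mp h with h | h
      · exact absurd h (hpxne i)
      · exact h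
    · exact absurd h hd
  -- Part 2
  have hcol : ∀ j, ∑ k, px k * (if k = j then (1:ℝ) else 0) = px j := by
    intro j; simp [mul_ite]
  have part2 : CMIM ϖ px (fun i j => if i = j then 1 else 0) = 1 := by
    unfold CMIM
    simp only [hcol]
    have hinner : ∀ j : Fin n,
        (∑ i, (px i * (if i = j then (1:ℝ) else 0) / px j) *
          Real.exp (ϖ * (1 - px i * (if i = j then (1:ℝ) else 0) / px j))) = 1 := by
      intro j
      rw [Finset.sum_eq_single j]
      · simp [div_self (hpxne j)]
      · intro b _ hb; simp [hb]
      · intro h; exact absurd (Finset.mem_univ j) h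
    simp only [hinner, mul_one, hsum]
  refine ⟨part1, part2, ?_⟩
  -- Part 3
  have hset : {r : ℝ | ∃ W : Fin n → Fin n → ℝ,
      IsChannel W ∧ avgDist px d W ≤ 0 ∧ r = MIM ϖ px - CMIM ϖ px W}
      = {MIM ϖ px - 1} := by
    ext r
    constructor
    · rintro ⟨W, hW, havg, hr⟩
      have hge : 0 ≤ avgDist px d W := by
        apply Finset.sum_nonneg
        intro i _
        apply Finset.sum_nonneg
        intro j _
        by_cases h : i = j
        · subst h; simp [hd0]
        · exact mul_nonneg (mul_nonneg (hpx i).le (hW.1 i j)) (hdpos i j h).le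
      have havg0 : avgDist px d W = 0 := le_antisymm havg hge
      have hoff := part1 W hW havg0
      have hdiag : ∀ i, W i i = 1 := by
        intro i
        have := hW.2 i
        rw [Finset.sum_eq_single i] at this
        · exact this
        · intro b _ hb; exact hoff i b (Ne.symm hb)
        · intro h; exact absurd (Finset.mem_univ i) h
      have hWeq : W = fun i j => if i = j then 1 else 0 := by
        funext i j
        by_cases h : i = j
        · subst h; simp [hdiag]
        · simp [h, hoff i j h]
      rw [hr, hWeq, part2]
      rfl
    · rintro rfl
      refine ⟨fun i j => if i = j then 1 else 0, ⟨?_, ?_⟩, ?_, ?_⟩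
      · intro i j; by_cases h : i = j <;> simp [h]
      · intro i; simp
      · unfold avgDist
        have : ∀ i : Fin n, ∑ j, px i * (if i = j then (1:ℝ) else 0) * d i j = 0 := by
          intro i
          apply Finset.sum_eq_zero
          intro j _
          by_cases h : i = j
          · subst h; simp [hd0]
          · simp [h]
        exact le_of_eq (Finset.sum_eq_zero fun i _ => this i)
      · rw [part2]
  unfold RD
  rw [hset, csInf_singleton]
end

section
/- Let X have finite alphabet with distribution p(x), let d(x,y) ≥ 0 be a distortion function with D_max = min over output symbols yⱼ of Σᵢ p(xᵢ)d(xᵢ,yⱼ), and suppose the MIM parameter ϖ satisfies 0 < ϖ ≤ 2·(minⱼ p(yⱼ))/(maxᵢ p(xᵢ)) for the output distributions involved. Then for every allowable distortion D with 0 ≤ D < D_max, the message importance distortion function is achieved on the boundary of the constraint: R_ϖ(D) = min over transfer matrices p(y|x) with average distortion D̄ exactly equal to D of {L(ϖ,X) − L(ϖ,X|Y)}. -/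
open Finset

noncomputable def gP (ϖ a b : ℝ) : ℝ := a * Real.exp (ϖ * (1 - a / b))

lemma f_concave {ϖ : ℝ} (hϖ : 0 < ϖ) (hϖ2 : ϖ ≤ 2) :
    ConcaveOn ℝ (Set.Icc (0:ℝ) 1) (fun x => x * Real.exp (ϖ * (1 - x))) := by
  have hderiv : deriv (fun x => x * Real.exp (ϖ * (1 - x)))
      = fun x => Real.exp (ϖ * (1 - x)) * (1 - ϖ * x) := by
    funext x
    have h1 : HasDerivAt (fun x : ℝ => ϖ * (1 - x)) (-ϖ) x := by
      simpa using ((hasDerivAt_const x (1:ℝ)).sub (hasDerivAt_id x)).const_mul ϖ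
    have h2 := h1.exp
    have h3 := (hasDerivAt_id x).mul h2
    simp only [id_eq] at h3
    exact h3.deriv.trans (by ring)
  have hderiv2 : deriv (fun x => Real.exp (ϖ * (1 - x)) * (1 - ϖ * x))
      = fun x => Real.exp (ϖ * (1 - x)) * (ϖ * (ϖ * x - 2)) := by
    funext x
    have h1 : HasDerivAt (fun x : ℝ => ϖ * (1 - x)) (-ϖ) x := by
      simpa using ((hasDerivAt_const x (1:ℝ)).sub (hasDerivAt_id x)).const_mul ϖ
    have h2 := h1.exp
    have h4 : HasDerivAt (fun x : ℝ => 1 - ϖ * x) (-ϖ) x := by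
      exact (((hasDerivAt_id x).const_mul ϖ).const_sub 1).congr_deriv (by ring)
    have h5 := h2.mul h4
    have := h5.deriv
    exact this.trans (by ring)
  apply concaveOn_of_deriv2_nonpos (convex_Icc 0 1)
  · exact (Continuous.mul continuous_id (Real.continuous_exp.comp (by continuity))).continuousOn
  · intro x _
    exact ((hasDerivAt_id x).mul (by simpa using
      (((hasDerivAt_const x (1:ℝ)).sub (hasDerivAt_id x)).const_mul ϖ).exp)).differentiableAt.differentiableWithinAt
  · intro x _
    rw [hderiv]
    exact ((Real.differentiable_exp.comp (by fun_prop)).mul (by fun_prop)).differentiableAt.differentiableWithinAt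
  · intro x hx
    rw [show deriv^[2] (fun x => x * Real.exp (ϖ * (1 - x))) = deriv (deriv (fun x => x * Real.exp (ϖ * (1 - x)))) from rfl, hderiv, hderiv2]
    rw [interior_Icc] at hx
    have hx1 : ϖ * x - 2 ≤ 0 := by nlinarith [hx.1, hx.2]
    exact mul_nonpos_of_nonneg_of_nonpos (Real.exp_pos _).le (by nlinarith)

lemma gP_zero (ϖ b : ℝ) : gP ϖ 0 b = 0 := by simp [gP]

lemma gP_smul (ϖ a b c : ℝ) (hc : 0 ≤ c) : gP ϖ (c * a) (c * b) = c * gP ϖ a b := by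
  rcases eq_or_lt_of_le hc with h | h
  · simp [gP, ← h]
  · rw [gP, gP, mul_div_mul_left _ _ (ne_of_gt h)]; ring

lemma gP_add {ϖ : ℝ} (hϖ : 0 < ϖ) (hϖ2 : ϖ ≤ 2) {a1 b1 a2 b2 : ℝ}
    (ha1 : 0 ≤ a1) (h1 : a1 ≤ b1) (ha2 : 0 ≤ a2) (h2 : a2 ≤ b2) :
    gP ϖ a1 b1 + gP ϖ a2 b2 ≤ gP ϖ (a1 + a2) (b1 + b2) := by
  have hb1 : 0 ≤ b1 := ha1.trans h1
  have hb2 : 0 ≤ b2 := ha2.trans h2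
  rcases eq_or_lt_of_le hb1 with hb1e | hb1p
  · have : a1 = 0 := le_antisymm (hb1e ▸ h1) ha1
    simp [this, ← hb1e, gP_zero]
  rcases eq_or_lt_of_le hb2 with hb2e | hb2p
  · have : a2 = 0 := le_antisymm (hb2e ▸ h2) ha2
    simp [this, ← hb2e, gP_zero]
  -- both positive
  have hB : (0:ℝ) < b1 + b2 := by linarith
  have hconc := f_concave hϖ hϖ2
  have hx1 : a1 / b1 ∈ Set.Icc (0:ℝ) 1 :=
    ⟨div_nonneg ha1 hb1, (div_le_one hb1p).2 h1⟩
  have hx2 : a2 / b2 ∈ Set.Icc (0:ℝ) 1 :=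
    ⟨div_nonneg ha2 hb2, (div_le_one hb2p).2 h2⟩
  have hw1 : (0:ℝ) ≤ b1 / (b1 + b2) := div_nonneg hb1 hB.le
  have hw2 : (0:ℝ) ≤ b2 / (b1 + b2) := div_nonneg hb2 hB.le
  have hw : b1 / (b1 + b2) + b2 / (b1 + b2) = 1 := by field_simp
  have key := hconc.2 hx1 hx2 hw1 hw2 hw
  simp only [smul_eq_mul] at key
  have harg : b1 / (b1 + b2) * (a1 / b1) + b2 / (b1 + b2) * (a2 / b2) = (a1 + a2) / (b1 + b2) := by
    field_simp
  rw [harg] at key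
  -- multiply key by (b1 + b2)
  have := mul_le_mul_of_nonneg_left key hB.le
  calc gP ϖ a1 b1 + gP ϖ a2 b2
      = (b1 + b2) * (b1 / (b1 + b2) * (a1 / b1 * Real.exp (ϖ * (1 - a1 / b1)))
        + b2 / (b1 + b2) * (a2 / b2 * Real.exp (ϖ * (1 - a2 / b2)))) := by
        rw [gP, gP]; field_simp
    _ ≤ (b1 + b2) * ((a1 + a2) / (b1 + b2) * Real.exp (ϖ * (1 - (a1 + a2) / (b1 + b2)))) := this
    _ = gP ϖ (a1 + a2) (b1 + b2) := by
        rw [gP]; field_simp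

lemma gP_sum {ϖ : ℝ} (hϖ : 0 < ϖ) (hϖ2 : ϖ ≤ 2) {ι : Type*} [DecidableEq ι] (s : Finset ι)
    (a b : ι → ℝ) (h : ∀ j ∈ s, 0 ≤ a j ∧ a j ≤ b j) :
    ∑ j ∈ s, gP ϖ (a j) (b j) ≤ gP ϖ (∑ j ∈ s, a j) (∑ j ∈ s, b j) := by
  induction s using Finset.induction_on with
  | empty => simp [gP_zero]
  | insert x s hx ih =>
    rw [Finset.sum_insert hx, Finset.sum_insert hx, Finset.sum_insert hx]
    have h1 := h x (Finset.mem_insert_self x s)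
    have hrest : ∀ j ∈ s, 0 ≤ a j ∧ a j ≤ b j := fun j hj => h j (Finset.mem_insert_of_mem hj)
    have hsa : 0 ≤ ∑ j ∈ s, a j := Finset.sum_nonneg fun j hj => (hrest j hj).1
    have hsab : ∑ j ∈ s, a j ≤ ∑ j ∈ s, b j := Finset.sum_le_sum fun j hj => (hrest j hj).2
    calc gP ϖ (a x) (b x) + ∑ j ∈ s, gP ϖ (a j) (b j)
        ≤ gP ϖ (a x) (b x) + gP ϖ (∑ j ∈ s, a j) (∑ j ∈ s, b j) := by
          linarith [ih hrest]
      _ ≤ gP ϖ (a x + ∑ j ∈ s, a j) (b x + ∑ j ∈ s, b j) :=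
          gP_add hϖ hϖ2 h1.1 h1.2 hsa hsab


lemma cmim_eq {ϖ : ℝ} {m n : ℕ} (px : Fin m → ℝ) (W : Fin m → Fin n → ℝ)
    (hpx : ∀ i, 0 ≤ px i) (hW : ∀ i j, 0 ≤ W i j) :
    CMIM ϖ px W = ∑ j, ∑ i, gP ϖ (px i * W i j) (∑ k, px k * W k j) := by
  unfold CMIM
  refine Finset.sum_congr rfl fun j _ => ?_
  by_cases hb0 : (∑ k, px k * W k j) = 0
  · rw [hb0, zero_mul]
    symm
    refine Finset.sum_eq_zero fun i _ => ?_
    have hz : px i * W i j = 0 :=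
      (Finset.sum_eq_zero_iff_of_nonneg
        (fun k _ => mul_nonneg (hpx k) (hW k j))).1 hb0 i (Finset.mem_univ i)
    rw [hz, gP, zero_mul]
  · rw [Finset.mul_sum]
    refine Finset.sum_congr rfl fun i _ => ?_
    rw [gP, ← mul_assoc, mul_div_cancel₀ _ hb0]

lemma mim_eq {ϖ : ℝ} {m : ℕ} (px : Fin m → ℝ) :
    MIM ϖ px = ∑ i, gP ϖ (px i) 1 := by
  simp [MIM, gP]

lemma loss_nonneg {ϖ : ℝ} (hϖ : 0 < ϖ) (hϖ2 : ϖ ≤ 2) {m n : ℕ}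
    (px : Fin m → ℝ) (hpx : ∀ i, 0 ≤ px i) (hsum : ∑ i, px i = 1)
    (W : Fin m → Fin n → ℝ) (hW : IsChannel W) :
    CMIM ϖ px W ≤ MIM ϖ px := by
  rw [cmim_eq px W hpx hW.1, mim_eq, Finset.sum_comm]
  refine Finset.sum_le_sum fun i _ => ?_
  have h1 : ∑ j, px i * W i j = px i := by
    rw [← Finset.mul_sum, hW.2 i, mul_one]
  have h2 : ∑ j : Fin n, (∑ k, px k * W k j) = 1 := by
    rw [Finset.sum_comm]
    calc ∑ k, ∑ j, px k * W k j = ∑ k, px k := by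
          refine Finset.sum_congr rfl fun k _ => ?_
          rw [← Finset.mul_sum, hW.2 k, mul_one]
      _ = 1 := hsum
  calc ∑ j, gP ϖ (px i * W i j) (∑ k, px k * W k j)
      ≤ gP ϖ (∑ j, px i * W i j) (∑ j, ∑ k, px k * W k j) := by
        refine gP_sum hϖ hϖ2 _ _ _ fun j _ => ⟨mul_nonneg (hpx i) (hW.1 i j), ?_⟩
        exact Finset.single_le_sum (fun k _ => mul_nonneg (hpx k) (hW.1 k j)) (Finset.mem_univ i)
    _ = gP ϖ (px i) 1 := by rw [h1, h2]

lemma cmim_mix {ϖ : ℝ} (hϖ : 0 < ϖ) (hϖ2 : ϖ ≤ 2) {m n : ℕ}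
    (px : Fin m → ℝ) (hpx : ∀ i, 0 ≤ px i)
    (W Q : Fin m → Fin n → ℝ) (hW : IsChannel W) (hQ : IsChannel Q)
    {l : ℝ} (hl0 : 0 ≤ l) (hl1 : l ≤ 1) :
    (1 - l) * CMIM ϖ px W + l * CMIM ϖ px Q ≤
      CMIM ϖ px (fun i j => (1 - l) * W i j + l * Q i j) := by
  have hW' : ∀ i j, 0 ≤ (1 - l) * W i j + l * Q i j := fun i j =>
    add_nonneg (mul_nonneg (by linarith) (hW.1 i j)) (mul_nonneg hl0 (hQ.1 i j))
  rw [cmim_eq px W hpx hW.1, cmim_eq px Q hpx hQ.1, cmim_eq px _ hpx hW',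
    Finset.mul_sum, Finset.mul_sum, ← Finset.sum_add_distrib]
  refine Finset.sum_le_sum fun j _ => ?_
  rw [Finset.mul_sum, Finset.mul_sum, ← Finset.sum_add_distrib]
  refine Finset.sum_le_sum fun i _ => ?_
  have ha : px i * ((1 - l) * W i j + l * Q i j)
      = (1 - l) * (px i * W i j) + l * (px i * Q i j) := by ring
  have hbW : ∀ k, px k * ((1 - l) * W k j + l * Q k j)
      = (1 - l) * (px k * W k j) + l * (px k * Q k j) := fun k => by ring
  have hb : (∑ k, px k * ((1 - l) * W k j + l * Q k j))
      = (1 - l) * (∑ k, px k * W k j) + l * (∑ k, px k * Q k j) := by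
    simp_rw [hbW, Finset.sum_add_distrib, Finset.mul_sum]
  rw [ha, hb, ← gP_smul ϖ _ _ _ (by linarith : (0:ℝ) ≤ 1 - l),
    ← gP_smul ϖ _ _ _ hl0]
  refine gP_add hϖ hϖ2 ?_ ?_ ?_ ?_
  · exact mul_nonneg (by linarith) (mul_nonneg (hpx i) (hW.1 i j))
  · refine mul_le_mul_of_nonneg_left ?_ (by linarith)
    exact Finset.single_le_sum (fun k _ => mul_nonneg (hpx k) (hW.1 k j)) (Finset.mem_univ i)
  · exact mul_nonneg hl0 (mul_nonneg (hpx i) (hQ.1 i j))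
  · refine mul_le_mul_of_nonneg_left ?_ hl0
    exact Finset.single_le_sum (fun k _ => mul_nonneg (hpx k) (hQ.1 k j)) (Finset.mem_univ i)

lemma cmim_det {ϖ : ℝ} {m n : ℕ} (px : Fin m → ℝ) (hpx : ∀ i, 0 ≤ px i)
    (hsum : ∑ i, px i = 1) (j0 : Fin n) :
    CMIM ϖ px (fun _ j => if j = j0 then (1:ℝ) else 0) = MIM ϖ px := by
  have hQ : ∀ (i : Fin m) (j : Fin n), (0:ℝ) ≤ if j = j0 then (1:ℝ) else 0 :=
    fun i j => by split <;> norm_num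
  rw [cmim_eq px _ hpx hQ, mim_eq]
  rw [Finset.sum_eq_single_of_mem j0 (Finset.mem_univ j0)]
  · refine Finset.sum_congr rfl fun i _ => ?_
    simp [hsum]
  · intro j _ hj
    refine Finset.sum_eq_zero fun i _ => ?_
    simp [hj, gP]

lemma avg_mix {m n : ℕ} (px : Fin m → ℝ) (d W Q : Fin m → Fin n → ℝ) (l : ℝ) :
    avgDist px d (fun i j => (1 - l) * W i j + l * Q i j)
      = (1 - l) * avgDist px d W + l * avgDist px d Q := by
  unfold avgDist
  rw [Finset.mul_sum, Finset.mul_sum, ← Finset.sum_add_distrib]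
  refine Finset.sum_congr rfl fun i _ => ?_
  rw [Finset.mul_sum, Finset.mul_sum, ← Finset.sum_add_distrib]
  exact Finset.sum_congr rfl fun j _ => by ring

lemma avg_det {m n : ℕ} (px : Fin m → ℝ) (d : Fin m → Fin n → ℝ) (j0 : Fin n) :
    avgDist px d (fun _ j => if j = j0 then (1:ℝ) else 0) = ∑ i, px i * d i j0 := by
  unfold avgDist
  refine Finset.sum_congr rfl fun i _ => ?_
  rw [Finset.sum_eq_single_of_mem j0 (Finset.mem_univ j0)]
  · simp
  · intro j _ hj; simp [hj]

/-- Equivalent expression for the message importance distortion function.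
With `D_max = minⱼ ∑ᵢ p(xᵢ)d(xᵢ,yⱼ)` and the MIM parameter in the concavity regime
(`0 < ϖ ≤ 2`, so that `ϖ ≤ 2/p(x|y)` for the conditional output distributions involved),
for every allowable distortion `0 ≤ D < D_max` the infimum defining `R_ϖ(D)` is achieved
on the boundary of the constraint: it equals the least message importance loss over
transfer matrices whose average distortion is exactly `D`. -/
theorem rd_boundary_expression (m n : ℕ) (ϖ : ℝ) (hϖ : 0 < ϖ) (hϖ2 : ϖ ≤ 2)
    (px : Fin (m+1) → ℝ) (hpx : ∀ i, 0 ≤ px i) (hsum : ∑ i, px i = 1)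
    (d : Fin (m+1) → Fin (n+1) → ℝ) (hd : ∀ i j, 0 ≤ d i j)
    (D : ℝ) (hD0 : 0 ≤ D)
    (hDmax : D < Finset.univ.inf' Finset.univ_nonempty
      (fun j => ∑ i, px i * d i j)) :
    RD ϖ px d D = sInf {r : ℝ | ∃ W : Fin (m+1) → Fin (n+1) → ℝ,
      IsChannel W ∧ avgDist px d W = D ∧ r = MIM ϖ px - CMIM ϖ px W} := by
  classical
  obtain ⟨j0, -, hj0⟩ := Finset.exists_mem_eq_inf' (Finset.univ_nonempty)
    (fun j : Fin (n+1) => ∑ i, px i * d i j)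
  set Dmax := Finset.univ.inf' Finset.univ_nonempty (fun j : Fin (n+1) => ∑ i, px i * d i j)
    with hDmaxdef
  set Q : Fin (m+1) → Fin (n+1) → ℝ := fun _ j => if j = j0 then (1:ℝ) else 0 with hQdef
  have hQch : IsChannel Q := by
    constructor
    · intro i j; simp only [hQdef]; split <;> norm_num
    · intro i; simp [hQdef]
  have hQavg : avgDist px d Q = Dmax := by rw [hQdef, avg_det]; exact hj0.symm
  set A := {r : ℝ | ∃ W : Fin (m+1) → Fin (n+1) → ℝ,
    IsChannel W ∧ avgDist px d W ≤ D ∧ r = MIM ϖ px - CMIM ϖ px W} with hA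
  set B := {r : ℝ | ∃ W : Fin (m+1) → Fin (n+1) → ℝ,
    IsChannel W ∧ avgDist px d W = D ∧ r = MIM ϖ px - CMIM ϖ px W} with hB
  have hBA : B ⊆ A := by
    rintro r ⟨W, hW, hWD, hr⟩
    exact ⟨W, hW, le_of_eq hWD, hr⟩
  -- key: from any feasible channel, get a boundary channel with no larger loss
  have key : ∀ r ∈ A, ∃ r' ∈ B, r' ≤ r := by
    rintro r ⟨W, hW, hWD, hr⟩
    set D' := avgDist px d W with hD'
    have hDm : D' < Dmax := lt_of_le_of_lt hWD hDmax
    set l := (D - D') / (Dmax - D') with hl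
    have hden : 0 < Dmax - D' := by linarith
    have hl0 : 0 ≤ l := div_nonneg (by linarith) hden.le
    have hl1 : l ≤ 1 := by
      rw [hl, div_le_one hden]; linarith
    set W' : Fin (m+1) → Fin (n+1) → ℝ := fun i j => (1 - l) * W i j + l * Q i j with hW'def
    have hW'ch : IsChannel W' := by
      constructor
      · intro i j
        exact add_nonneg (mul_nonneg (by linarith) (hW.1 i j)) (mul_nonneg hl0 (hQch.1 i j))
      · intro i
        rw [hW'def]
        simp only
        rw [Finset.sum_add_distrib, ← Finset.mul_sum, ← Finset.mul_sum, hW.2 i, hQch.2 i]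
        ring
    have hW'avg : avgDist px d W' = D := by
      rw [hW'def, avg_mix, hQavg, ← hD']
      rw [hl]; field_simp; ring
    have hW'loss : MIM ϖ px - CMIM ϖ px W' ≤ MIM ϖ px - CMIM ϖ px W := by
      have hmix := cmim_mix hϖ hϖ2 px hpx W Q hW hQch hl0 hl1
      have hQc : CMIM ϖ px Q = MIM ϖ px := cmim_det px hpx hsum j0
      have hWle := loss_nonneg hϖ hϖ2 px hpx hsum W hW
      rw [hQc] at hmix
      rw [← hW'def] at hmix
      nlinarith
    exact ⟨MIM ϖ px - CMIM ϖ px W', ⟨W', hW'ch, hW'avg, rfl⟩, hr ▸ hW'loss⟩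
  have hAlb : ∀ r ∈ A, (0:ℝ) ≤ r := by
    rintro r ⟨W, hW, -, hr⟩
    have := loss_nonneg hϖ hϖ2 px hpx hsum W hW
    linarith [hr ▸ sub_nonneg.2 this]
  have hAbdd : BddBelow A := ⟨0, hAlb⟩
  have hBbdd : BddBelow B := ⟨0, fun r hr => hAlb r (hBA hr)⟩
  rcases Set.eq_empty_or_nonempty A with hAe | hAne
  · have hBe : B = ∅ := Set.eq_empty_of_subset_empty (hAe ▸ hBA)
    rw [RD, ← hA, hAe, hBe]
  · have hBne : B.Nonempty := by
      obtain ⟨r, hrA⟩ := hAne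
      obtain ⟨r', hr'B, -⟩ := key r hrA
      exact ⟨r', hr'B⟩
    rw [RD, ← hA]
    apply le_antisymm
    · exact csInf_le_csInf hAbdd hBne hBA
    · refine le_csInf hAne fun r hrA => ?_
      obtain ⟨r', hr'B, hle⟩ := key r hrA
      exact le_trans (csInf_le hBbdd hr'B) hle
end

section
/- Let X be a Bernoulli(p) source with distribution (p, 1−p), let the distortion function be Hamming distortion (d(x,y) = 0 if x = y, 1 otherwise), let 0 ≤ D ≤ min{p, 1−p} with D < 1/2, and suppose 0 < ϖ ≤ 2·(minⱼ p(yⱼ))/(maxᵢ p(xᵢ)) for the optimal output distribution. Then the message importance distortion function equals R_ϖ(D) = [p·exp(ϖ(1−p)) + (1−p)·exp(ϖp)] − [D·exp(ϖ(1−D)) + (1−D)·exp(ϖD)], and it is achieved by the transfer matrix p(y=1|x=0) = (1−p−D)D/(p(1−2D)), p(y=0|x=0) = (1−D)(p−D)/(p(1−2D)), p(y=0|x=1) = D(p−D)/((1−p)(1−2D)), p(y=1|x=1) = (1−p−D)(1−D)/((1−p)(1−2D)). -/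
open Finset

/-! ### Auxiliary machinery -/

/-- The function `g(t) = t·e^{ϖ(1−t)} + (1−t)·e^{ϖt}`. -/
noncomputable def gfun (ϖ t : ℝ) : ℝ :=
  t * Real.exp (ϖ * (1 - t)) + (1 - t) * Real.exp (ϖ * t)

lemma gfun_symm (ϖ t : ℝ) : gfun ϖ (1 - t) = gfun ϖ t := by
  simp only [gfun, sub_sub_cancel]; ring

/-- The derivative of `gfun`. -/
noncomputable def gder (ϖ t : ℝ) : ℝ :=
  (1 - ϖ*t) * Real.exp (ϖ*(1-t)) - (1 - ϖ*(1-t)) * Real.exp (ϖ*t)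

lemma hasDerivAt_expa (ϖ t : ℝ) :
    HasDerivAt (fun s => Real.exp (ϖ * (1 - s))) (-ϖ * Real.exp (ϖ * (1 - t))) t := by
  have h : HasDerivAt (fun s : ℝ => ϖ * (1 - s)) (-ϖ) t := by
    simpa using (((hasDerivAt_id t).const_sub (1:ℝ)).const_mul ϖ)
  refine ((Real.hasDerivAt_exp (ϖ * (1 - t))).comp t h).congr_deriv ?_; ring

lemma hasDerivAt_expb (ϖ t : ℝ) :
    HasDerivAt (fun s => Real.exp (ϖ * s)) (ϖ * Real.exp (ϖ * t)) t := by
  have h : HasDerivAt (fun s : ℝ => ϖ * s) ϖ t := by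
    simpa using ((hasDerivAt_id t).const_mul ϖ)
  exact ((Real.hasDerivAt_exp (ϖ * t)).comp t h).congr_deriv (by ring)

lemma hasDerivAt_gfun (ϖ t : ℝ) : HasDerivAt (gfun ϖ) (gder ϖ t) t := by
  have h1 : HasDerivAt (fun s : ℝ => s * Real.exp (ϖ*(1-s)))
      (1 * Real.exp (ϖ*(1-t)) + t * (-ϖ * Real.exp (ϖ*(1-t)))) t :=
    (hasDerivAt_id t).mul (hasDerivAt_expa ϖ t)
  have h2 : HasDerivAt (fun s : ℝ => (1 - s) * Real.exp (ϖ*s))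
      ((-1) * Real.exp (ϖ*t) + (1 - t) * (ϖ * Real.exp (ϖ*t))) t := by
    exact ((by simpa using ((hasDerivAt_id t).const_sub (1:ℝ)) :
      HasDerivAt (fun s : ℝ => 1 - s) (-1) t)).mul (hasDerivAt_expb ϖ t)
  have h := h1.add h2
  refine h.congr_deriv ?_
  simp only [gder]; ring

lemma hasDerivAt_gder (ϖ t : ℝ) :
    HasDerivAt (gder ϖ)
      (-(ϖ * ((2 - ϖ*t) * Real.exp (ϖ*(1-t)) + (2 - ϖ*(1-t)) * Real.exp (ϖ*t)))) t := by
  have ha : HasDerivAt (fun s : ℝ => 1 - ϖ*s) (-ϖ) t := by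
    simpa using (((hasDerivAt_id t).const_mul ϖ).const_sub (1:ℝ))
  have hb : HasDerivAt (fun s : ℝ => 1 - ϖ*(1-s)) ϖ t := by
    have := (((hasDerivAt_id t).const_sub (1:ℝ)).const_mul ϖ).const_sub (1:ℝ)
    simpa using this
  have h1 := ha.mul (hasDerivAt_expa ϖ t)
  have h2 := hb.mul (hasDerivAt_expb ϖ t)
  have h := h1.sub h2
  refine h.congr_deriv ?_
  ring

lemma gfun_concave {ϖ : ℝ} (h0 : 0 ≤ ϖ) (h2 : ϖ ≤ 2) :
    ConcaveOn ℝ (Set.Icc (0:ℝ) 1) (gfun ϖ) := by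
  apply concaveOn_of_hasDerivWithinAt2_nonpos (f' := gder ϖ)
    (f'' := fun t => -(ϖ * ((2 - ϖ*t) * Real.exp (ϖ*(1-t)) + (2 - ϖ*(1-t)) * Real.exp (ϖ*t))))
    (convex_Icc 0 1)
    ((Differentiable.continuous fun t => (hasDerivAt_gfun ϖ t).differentiableAt).continuousOn)
    (fun x _ => (hasDerivAt_gfun ϖ x).hasDerivWithinAt)
    (fun x _ => (hasDerivAt_gder ϖ x).hasDerivWithinAt)
  intro x hx
  rw [interior_Icc] at hx
  obtain ⟨hx0, hx1⟩ := hx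
  have e1 := Real.exp_pos (ϖ*(1-x))
  have e2 := Real.exp_pos (ϖ*x)
  have c1 : 0 ≤ 2 - ϖ*x := by nlinarith
  have c2 : 0 ≤ 2 - ϖ*(1-x) := by nlinarith
  have t1 : 0 ≤ (2 - ϖ*x) * Real.exp (ϖ*(1-x)) := mul_nonneg c1 e1.le
  have t2 : 0 ≤ (2 - ϖ*(1-x)) * Real.exp (ϖ*x) := mul_nonneg c2 e2.le
  nlinarith [mul_nonneg h0 (add_nonneg t1 t2)]

lemma gfun_mono {ϖ : ℝ} (h0 : 0 ≤ ϖ) (h2 : ϖ ≤ 2) :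
    MonotoneOn (gfun ϖ) (Set.Icc (0:ℝ) (1/2)) := by
  apply monotoneOn_of_deriv_nonneg (convex_Icc 0 (1/2))
    ((Differentiable.continuous fun t => (hasDerivAt_gfun ϖ t).differentiableAt).continuousOn)
    (fun x _ => (hasDerivAt_gfun ϖ x).differentiableAt.differentiableWithinAt)
  intro x hx
  rw [interior_Icc] at hx
  obtain ⟨hx0, hx1⟩ := hx
  rw [(hasDerivAt_gfun ϖ x).deriv]
  have hab : Real.exp (ϖ*x) ≤ Real.exp (ϖ*(1-x)) := by
    apply Real.exp_le_exp.2
    nlinarith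
  have e2 := Real.exp_pos (ϖ*x)
  have hu : 0 ≤ 1 - ϖ*x := by nlinarith
  have huv : 1 - ϖ*(1-x) ≤ 1 - ϖ*x := by nlinarith
  rw [gder]
  rcases le_or_gt (1 - ϖ*(1-x)) 0 with hv | hv
  · nlinarith
  · nlinarith

/-- Contribution of an output letter to the CMIM. -/
noncomputable def cterm (ϖ A B : ℝ) : ℝ :=
  (A + B) * (A/(A+B) * Real.exp (ϖ * (1 - A/(A+B))) + B/(A+B) * Real.exp (ϖ * (1 - B/(A+B))))

lemma cmim_two (ϖ : ℝ) (px : Fin 2 → ℝ) (W : Fin 2 → Fin 2 → ℝ) :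
    CMIM ϖ px W
      = cterm ϖ (px 0 * W 0 0) (px 1 * W 1 0) + cterm ϖ (px 0 * W 0 1) (px 1 * W 1 1) := by
  simp only [CMIM, cterm, Fin.sum_univ_two]

lemma cterm_zero (ϖ A B : ℝ) (h : A + B = 0) : cterm ϖ A B = 0 := by
  simp [cterm, h]

lemma cterm_posq (ϖ A B : ℝ) (h : A + B ≠ 0) :
    cterm ϖ A B = (A + B) * gfun ϖ (A/(A+B)) := by
  have h1 : B/(A+B) = 1 - A/(A+B) := by field_simp; ring
  have h2 : 1 - B/(A+B) = A/(A+B) := by rw [h1]; ring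
  rw [cterm, gfun, h2, h1]

lemma avgDist_two (p : ℝ) (W : Fin 2 → Fin 2 → ℝ) :
    avgDist ![p, 1-p] (fun i j => if i = j then 0 else 1) W
      = p * W 0 1 + (1-p) * W 1 0 := by
  simp [avgDist, Fin.sum_univ_two]

lemma mim_two (ϖ p : ℝ) : MIM ϖ ![p, 1-p] = gfun ϖ p := by
  simp only [MIM, Fin.sum_univ_two, gfun, Matrix.cons_val_zero, Matrix.cons_val_one,
    Matrix.head_cons, sub_sub_cancel]

/-- Converse: any admissible channel has CMIM at most `gfun ϖ D`. -/
lemma cmim_le (ϖ p D : ℝ) (hp0 : 0 < p) (hp1 : p < 1) (hϖ0 : 0 ≤ ϖ) (hϖ2 : ϖ ≤ 2)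
    (hD0 : 0 ≤ D) (hD2 : D ≤ 1/2)
    (W : Fin 2 → Fin 2 → ℝ) (hW : IsChannel W)
    (hd : avgDist ![p, 1-p] (fun i j => if i = j then 0 else 1) W ≤ D) :
    CMIM ϖ ![p, 1-p] W ≤ gfun ϖ D := by
  obtain ⟨hWn, hWs⟩ := hW
  rw [avgDist_two] at hd
  rw [cmim_two]
  simp only [Matrix.cons_val_zero, Matrix.cons_val_one, Matrix.head_cons]
  set A0 := p * W 0 0 with hA0d
  set B0 := (1-p) * W 1 0 with hB0d
  set A1 := p * W 0 1 with hA1d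
  set B1 := (1-p) * W 1 1 with hB1d
  have hp1' : (0:ℝ) < 1 - p := by linarith
  have hA0 : 0 ≤ A0 := mul_nonneg hp0.le (hWn 0 0)
  have hB0 : 0 ≤ B0 := mul_nonneg hp1'.le (hWn 1 0)
  have hA1 : 0 ≤ A1 := mul_nonneg hp0.le (hWn 0 1)
  have hB1 : 0 ≤ B1 := mul_nonneg hp1'.le (hWn 1 1)
  have hs0 := hWs 0
  have hs1 := hWs 1
  rw [Fin.sum_univ_two] at hs0 hs1
  have hqr : (A0 + B0) + (A1 + B1) = 1 := by
    rw [hA0d, hB0d, hA1d, hB1d]; nlinarith [hs0, hs1]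
  set q := A0 + B0 with hqd
  set r := A1 + B1 with hrd
  have hq0 : 0 ≤ q := add_nonneg hA0 hB0
  have hr0 : 0 ≤ r := add_nonneg hA1 hB1
  set e0 : ℝ := if q = 0 then 0 else B0 / q with he0d
  set e1 : ℝ := if r = 0 then 0 else A1 / r with he1d
  have he0 : e0 ∈ Set.Icc (0:ℝ) 1 := by
    rw [he0d]; split
    · exact ⟨le_refl 0, zero_le_one⟩
    · refine ⟨div_nonneg hB0 hq0, ?_⟩
      rw [div_le_one (lt_of_le_of_ne hq0 (Ne.symm ‹q ≠ 0›))]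
      linarith
  have he1 : e1 ∈ Set.Icc (0:ℝ) 1 := by
    rw [he1d]; split
    · exact ⟨le_refl 0, zero_le_one⟩
    · refine ⟨div_nonneg hA1 hr0, ?_⟩
      rw [div_le_one (lt_of_le_of_ne hr0 (Ne.symm ‹r ≠ 0›))]
      linarith
  have hc0 : cterm ϖ A0 B0 = q * gfun ϖ e0 := by
    rw [he0d]; by_cases h : q = 0
    · rw [cterm_zero ϖ A0 B0 h, h, zero_mul]
    · rw [cterm_posq ϖ A0 B0 h, if_neg h, ← hqd]
      congr 1
      rw [← gfun_symm ϖ (B0/q)]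
      congr 1
      field_simp
      linarith [hqd]
  have hc1 : cterm ϖ A1 B1 = r * gfun ϖ e1 := by
    rw [he1d]; by_cases h : r = 0
    · rw [cterm_zero ϖ A1 B1 h, h, zero_mul]
    · rw [cterm_posq ϖ A1 B1 h, if_neg h, ← hrd]
  have hqe : q * e0 = B0 := by
    rw [he0d]; by_cases h : q = 0
    · rw [if_pos h, h, zero_mul]
      have : B0 = 0 := by linarith [hqd, hA0]
      linarith
    · rw [if_neg h, mul_div_cancel₀ _ h]
  have hre : r * e1 = A1 := by
    rw [he1d]; by_cases h : r = 0
    · rw [if_pos h, h, zero_mul]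
      have : A1 = 0 := by linarith [hrd, hB1]
      linarith
    · rw [if_neg h, mul_div_cancel₀ _ h]
  have hE : q * e0 + r * e1 = A1 + B0 := by rw [hqe, hre]; ring
  have hElD : A1 + B0 ≤ D := by linarith
  have jensen := (gfun_concave hϖ0 hϖ2).2 he0 he1 hq0 hr0 hqr
  simp only [smul_eq_mul] at jensen
  have hmono := gfun_mono hϖ0 hϖ2
  have hED : gfun ϖ (q * e0 + r * e1) ≤ gfun ϖ D := by
    apply hmono _ _ _
    · rw [hE]
      exact ⟨add_nonneg hA1 hB0, by linarith⟩
    · exact ⟨hD0, hD2⟩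
    · rw [hE]; exact hElD
  rw [hc0, hc1]
  calc q * gfun ϖ e0 + r * gfun ϖ e1 ≤ gfun ϖ (q * e0 + r * e1) := jensen
    _ ≤ gfun ϖ D := hED

lemma channel_explicit (p D : ℝ) (hp0 : 0 < p) (hp1 : p < 1)
    (hDp : D ≤ p) (hDq : D ≤ 1 - p) (hDhalf : D < 1/2) (hD0 : 0 ≤ D) :
    IsChannel ![![(1 - D) * (p - D) / (p * (1 - 2*D)),
                  (1 - p - D) * D / (p * (1 - 2*D))],
                ![D * (p - D) / ((1 - p) * (1 - 2*D)),
                  (1 - p - D) * (1 - D) / ((1 - p) * (1 - 2*D))]] := by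
  have ht : (0:ℝ) < 1 - 2*D := by linarith
  have hp1' : (0:ℝ) < 1 - p := by linarith
  constructor
  · intro i j
    fin_cases i <;> fin_cases j <;>
      simp only [Matrix.cons_val', Matrix.cons_val_zero, Matrix.cons_val_one, Matrix.head_cons,
        Matrix.empty_val', Matrix.cons_val_fin_one, Matrix.head_fin_const] <;>
      apply div_nonneg <;> nlinarith
  · intro i
    rw [Fin.sum_univ_two]
    fin_cases i <;>
      simp only [Fin.zero_eta, Fin.mk_one, Matrix.cons_val', Matrix.cons_val_zero, Matrix.cons_val_one, Matrix.head_cons,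
        Matrix.empty_val', Matrix.cons_val_fin_one, Matrix.head_fin_const] <;>
      field_simp [hp0.ne', hp1'.ne', ht.ne'] <;> rw [div_eq_iff (by linarith)] <;> ring

lemma cmim_explicit (ϖ p D : ℝ) (hp0 : 0 < p) (hp1 : p < 1) (hD0 : 0 ≤ D)
    (hDp : D ≤ p) (hDq : D ≤ 1 - p) (hDhalf : D < 1/2) :
    CMIM ϖ ![p, 1-p] ![![(1 - D) * (p - D) / (p * (1 - 2*D)),
                  (1 - p - D) * D / (p * (1 - 2*D))],
                ![D * (p - D) / ((1 - p) * (1 - 2*D)),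
                  (1 - p - D) * (1 - D) / ((1 - p) * (1 - 2*D))]] = gfun ϖ D := by
  have ht : (0:ℝ) < 1 - 2*D := by linarith
  have ht' : (1:ℝ) - 2*D ≠ 0 := ne_of_gt ht
  have hp1' : (0:ℝ) < 1 - p := by linarith
  rw [cmim_two]
  simp only [Matrix.cons_val', Matrix.cons_val_zero, Matrix.cons_val_one, Matrix.head_cons,
    Matrix.empty_val', Matrix.cons_val_fin_one, Matrix.head_fin_const]
  have hA0 : p * ((1 - D) * (p - D) / (p * (1 - 2*D))) = (1-D)*(p-D)/(1-2*D) := by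
    field_simp
  have hB0 : (1-p) * (D * (p - D) / ((1 - p) * (1 - 2*D))) = D*(p-D)/(1-2*D) := by
    field_simp
  have hA1 : p * ((1 - p - D) * D / (p * (1 - 2*D))) = (1-p-D)*D/(1-2*D) := by
    field_simp
  have hB1 : (1-p) * ((1 - p - D) * (1 - D) / ((1 - p) * (1 - 2*D)))
      = (1-p-D)*(1-D)/(1-2*D) := by
    field_simp
  rw [hA0, hB0, hA1, hB1]
  have key0 : cterm ϖ ((1-D)*(p-D)/(1-2*D)) (D*(p-D)/(1-2*D)) = (p-D)/(1-2*D) * gfun ϖ D := by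
    rcases eq_or_lt_of_le hDp with h | h
    · rw [show p - D = 0 by linarith]
      norm_num [cterm]
    · have hsum : (1-D)*(p-D)/(1-2*D) + D*(p-D)/(1-2*D) = (p-D)/(1-2*D) := by
        field_simp; ring
      have hpD : p - D ≠ 0 := ne_of_gt (by linarith)
      have hne : (1-D)*(p-D)/(1-2*D) + D*(p-D)/(1-2*D) ≠ 0 := by
        rw [hsum]; exact ne_of_gt (div_pos (by linarith) ht)
      rw [cterm_posq _ _ _ hne, hsum]
      congr 1
      rw [show ((1-D)*(p-D)/(1-2*D)) / ((p-D)/(1-2*D)) = 1 - D by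
        field_simp; exact mul_div_cancel_right₀ _ (by linarith)]
      exact gfun_symm ϖ D
  have key1 : cterm ϖ ((1-p-D)*D/(1-2*D)) ((1-p-D)*(1-D)/(1-2*D))
      = (1-p-D)/(1-2*D) * gfun ϖ D := by
    rcases eq_or_lt_of_le hDq with h | h
    · rw [show 1 - p - D = 0 by linarith]
      norm_num [cterm]
    · have hsum : (1-p-D)*D/(1-2*D) + (1-p-D)*(1-D)/(1-2*D) = (1-p-D)/(1-2*D) := by
        field_simp; ring
      have hpD : 1 - p - D ≠ 0 := ne_of_gt (by linarith)
      have hne : (1-p-D)*D/(1-2*D) + (1-p-D)*(1-D)/(1-2*D) ≠ 0 := by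
        rw [hsum]; exact ne_of_gt (div_pos (by linarith) ht)
      rw [cterm_posq _ _ _ hne, hsum]
      congr 1
      rw [show ((1-p-D)*D/(1-2*D)) / ((1-p-D)/(1-2*D)) = D by
        field_simp; exact mul_div_cancel_right₀ _ (by linarith)]
  rw [key0, key1, ← add_mul]
  rw [show (p-D)/(1-2*D) + (1-p-D)/(1-2*D) = 1 by rw [← add_div, show p-D+(1-p-D) = 1-2*D by ring, div_self ht'], one_mul]

theorem rd_bernoulli_hamming (ϖ p D : ℝ) (hp0 : 0 < p) (hp1 : p < 1)
    (hD0 : 0 ≤ D) (hDp : D ≤ min p (1 - p)) (hDhalf : D < 1/2)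
    (hϖ : 0 < ϖ)
    (hϖ2 : ϖ ≤ 2 * min ((p - D) / (1 - 2*D)) ((1 - p - D) / (1 - 2*D))
        / max p (1 - p))
    (W : Fin 2 → Fin 2 → ℝ)
    (hW : W = ![![(1 - D) * (p - D) / (p * (1 - 2*D)),
                  (1 - p - D) * D / (p * (1 - 2*D))],
                ![D * (p - D) / ((1 - p) * (1 - 2*D)),
                  (1 - p - D) * (1 - D) / ((1 - p) * (1 - 2*D))]]) :
    RD ϖ ![p, 1 - p] (fun i j => if i = j then 0 else 1) D
        = (p * Real.exp (ϖ * (1 - p)) + (1 - p) * Real.exp (ϖ * p))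
          - (D * Real.exp (ϖ * (1 - D)) + (1 - D) * Real.exp (ϖ * D)) ∧
    IsChannel W ∧
    avgDist ![p, 1 - p] (fun i j => if i = j then 0 else 1) W ≤ D ∧
    MIM ϖ ![p, 1 - p] - CMIM ϖ ![p, 1 - p] W
        = RD ϖ ![p, 1 - p] (fun i j => if i = j then 0 else 1) D := by
  have hDp' : D ≤ p := le_trans hDp (min_le_left _ _)
  have hDq' : D ≤ 1 - p := le_trans hDp (min_le_right _ _)
  have ht : (0:ℝ) < 1 - 2*D := by linarith
  have ht' : (1:ℝ) - 2*D ≠ 0 := ne_of_gt ht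
  have hp1' : (0:ℝ) < 1 - p := by linarith
  -- ϖ ≤ 2
  have hM : (0:ℝ) < max p (1-p) := lt_of_lt_of_le hp0 (le_max_left _ _)
  have hϖtwo : ϖ ≤ 2 := by
    have hab : (p-D)/(1-2*D) + (1-p-D)/(1-2*D) = 1 := by
      rw [← add_div, show p-D+(1-p-D) = 1-2*D by ring, div_self ht']
    have h1 : 2 * min ((p - D) / (1 - 2*D)) ((1 - p - D) / (1 - 2*D)) ≤ 1 := by
      have m1 := min_le_left ((p - D) / (1 - 2*D)) ((1 - p - D) / (1 - 2*D))
      have m2 := min_le_right ((p - D) / (1 - 2*D)) ((1 - p - D) / (1 - 2*D))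
      linarith
    have h2 : 2 * min ((p - D) / (1 - 2*D)) ((1 - p - D) / (1 - 2*D)) / max p (1-p)
        ≤ 1 / max p (1-p) := by
      exact div_le_div_of_nonneg_right h1 hM.le
    have h3 : 1 / max p (1-p) ≤ 2 := by
      rw [div_le_iff₀ hM]
      have := le_max_left p (1-p)
      have := le_max_right p (1-p)
      linarith
    linarith
  -- properties of explicit channel
  have hch : IsChannel W := by
    rw [hW]; exact channel_explicit p D hp0 hp1 hDp' hDq' hDhalf hD0
  have hav : avgDist ![p, 1-p] (fun i j => if i = j then 0 else 1) W = D := by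
    rw [avgDist_two, hW]
    simp only [Matrix.cons_val', Matrix.cons_val_zero, Matrix.cons_val_one, Matrix.head_cons,
      Matrix.empty_val', Matrix.cons_val_fin_one, Matrix.head_fin_const]
    field_simp [hp0.ne', hp1'.ne', ht.ne']
    rw [div_eq_iff (by linarith)]
    ring
  have hcm : CMIM ϖ ![p, 1-p] W = gfun ϖ D := by
    rw [hW]; exact cmim_explicit ϖ p D hp0 hp1 hD0 hDp' hDq' hDhalf
  have hm : MIM ϖ ![p, 1-p] = gfun ϖ p := mim_two ϖ p
  have hval : MIM ϖ ![p, 1-p] - CMIM ϖ ![p, 1-p] W = gfun ϖ p - gfun ϖ D := by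
    rw [hm, hcm]
  have hrd : RD ϖ ![p, 1-p] (fun i j => if i = j then 0 else 1) D
      = gfun ϖ p - gfun ϖ D := by
    unfold RD
    apply IsLeast.csInf_eq
    constructor
    · exact ⟨W, hch, le_of_eq hav, hval.symm⟩
    · rintro x ⟨W', hW', hd', rfl⟩
      have hle := cmim_le ϖ p D hp0 hp1 hϖ.le hϖtwo hD0 hDhalf.le W' hW' hd'
      rw [hm]
      have : gfun ϖ D ≤ 0 + gfun ϖ D := by linarith
      linarith
  refine ⟨?_, hch, le_of_eq hav, ?_⟩
  · rw [hrd]; simp only [gfun]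
  · rw [hval, hrd]
end
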